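/- arXiv:1507.02521 — 4 statements merged into one kernel-verified Lean document; each statement's English description precedes it below -/
import Mathlib

section
/- The hard-sphere partition function grows when the domain absorbs part of the boundary condition: for every finite set C ⊆ ℝ^d, all bounded Borel sets A ⊆ B ⊆ ℝ^d, every activity λ ≥ 0 and radius R ≥ 0, one has Z(A, C \ A, λ) ≤ Z(B, C \ B, λ). -/
open MeasureTheory
open scoped Classical

/-- Hard-core indicator of a tuple `x = (x 0, …, x (n-1))` of points of `ℝ^d`
under boundary condition `C`: equals `1` iff `dist (x i) (x j) > R` for all `i < j`
and `dist (x i) c > R` for all `i` and all `c ∈ C`. -/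
noncomputable def hsInd (d : ℕ) (R : ℝ) (C : Finset (EuclideanSpace ℝ (Fin d)))
    {n : ℕ} (x : Fin n → EuclideanSpace ℝ (Fin d)) : ℝ :=
  if (∀ i j : Fin n, i < j → R < dist (x i) (x j)) ∧
      (∀ i : Fin n, ∀ c ∈ C, R < dist (x i) c)
    then 1 else 0
open MeasureTheory
open scoped Classical

lemma hsInd_meas (d : ℕ) (R : ℝ) (C : Finset (EuclideanSpace ℝ (Fin d))) (n : ℕ) :
    Measurable (fun x : Fin n → EuclideanSpace ℝ (Fin d) => hsInd d R C x) := by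
  unfold hsInd
  refine Measurable.ite ?_ measurable_const measurable_const
  refine MeasurableSet.inter ?_ ?_
  · show MeasurableSet {x : Fin n → EuclideanSpace ℝ (Fin d) |
        ∀ i j : Fin n, i < j → R < dist (x i) (x j)}
    simp only [Set.setOf_forall]
    refine MeasurableSet.iInter fun i => ?_
    refine MeasurableSet.iInter fun j => ?_
    refine MeasurableSet.iInter fun _ => ?_
    exact measurableSet_lt measurable_const
      (((continuous_apply i).dist (continuous_apply j)).measurable)
  · show MeasurableSet {x : Fin n → EuclideanSpace ℝ (Fin d) |
        ∀ i : Fin n, ∀ c ∈ C, R < dist (x i) c}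
    simp only [Set.setOf_forall]
    refine MeasurableSet.iInter fun i => ?_
    refine MeasurableSet.biInter (Finset.countable_toSet C) fun c hc => ?_
    exact measurableSet_lt measurable_const
      (((continuous_apply i).dist continuous_const).measurable)
/-- The hard-sphere partition function
`Z(B,C,λ) = Σ_{n≥0} (λ^n/n!) ∫_{B^n} h_n(x|C) dx`. -/
noncomputable def partFun (d : ℕ) (R lam : ℝ)
    (B : Set (EuclideanSpace ℝ (Fin d)))
    (C : Finset (EuclideanSpace ℝ (Fin d))) : ℝ :=
  ∑' n : ℕ, (lam ^ n / n.factorial) *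
    ∫ x in Set.univ.pi (fun _ : Fin n => B), hsInd d R C x

lemma hsInd_nonneg (d : ℕ) (R : ℝ) (C : Finset (EuclideanSpace ℝ (Fin d)))
    {n : ℕ} (x : Fin n → EuclideanSpace ℝ (Fin d)) : 0 ≤ hsInd d R C x := by
  unfold hsInd; split_ifs <;> norm_num

lemma hsInd_le_one (d : ℕ) (R : ℝ) (C : Finset (EuclideanSpace ℝ (Fin d)))
    {n : ℕ} (x : Fin n → EuclideanSpace ℝ (Fin d)) : hsInd d R C x ≤ 1 := by
  unfold hsInd; split_ifs <;> norm_num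

lemma hsInd_mono (d : ℕ) (R : ℝ) {C C' : Finset (EuclideanSpace ℝ (Fin d))}
    (h : C' ⊆ C) {n : ℕ} (x : Fin n → EuclideanSpace ℝ (Fin d)) :
    hsInd d R C x ≤ hsInd d R C' x := by
  unfold hsInd
  split_ifs with h1 h2
  · exact le_refl _
  · exact absurd ⟨h1.1, fun i c hc => h1.2 i c (h hc)⟩ h2
  · norm_num
  · exact le_refl _

/-- The hard-sphere partition function grows when the domain absorbs part of the
boundary condition: for bounded Borel sets `A ⊆ B`,
`Z(A, C \ A, λ) ≤ Z(B, C \ B, λ)`. -/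
theorem partFun_mono_domain (d : ℕ) (R lam : ℝ) (hR : 0 ≤ R) (hlam : 0 ≤ lam)
    (A B : Set (EuclideanSpace ℝ (Fin d)))
    (hAm : MeasurableSet A) (hBm : MeasurableSet B)
    (hBb : Bornology.IsBounded B) (hAB : A ⊆ B)
    (C : Finset (EuclideanSpace ℝ (Fin d))) :
    partFun d R lam A (C.filter fun c => c ∉ A) ≤
      partFun d R lam B (C.filter fun c => c ∉ B) := by
  set CA := C.filter fun c => c ∉ A with hCA
  set CB := C.filter fun c => c ∉ B with hCB
  have hCsub : CB ⊆ CA := by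
    intro c hc
    rw [hCB, Finset.mem_filter] at hc
    rw [hCA, Finset.mem_filter]
    exact ⟨hc.1, fun hcA => hc.2 (hAB hcA)⟩
  set SA : (n : ℕ) → Set (Fin n → EuclideanSpace ℝ (Fin d)) :=
    fun n => Set.univ.pi (fun _ : Fin n => A) with hSA
  set SB : (n : ℕ) → Set (Fin n → EuclideanSpace ℝ (Fin d)) :=
    fun n => Set.univ.pi (fun _ : Fin n => B) with hSB
  have hSAB : ∀ n, SA n ⊆ SB n := fun n x hx i hi => hAB (hx i hi)
  have hvolB : ∀ n, volume (SB n) = (volume B) ^ n := by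
    intro n
    rw [hSB, MeasureTheory.volume_pi_pi]
    simp
  have hfinB : ∀ n, volume (SB n) < ⊤ := by
    intro n
    rw [hvolB]
    exact ENNReal.pow_lt_top hBb.measure_lt_top
  have hfinA : ∀ n, volume (SA n) < ⊤ := fun n =>
    lt_of_le_of_lt (measure_mono (hSAB n)) (hfinB n)
  -- integrability of hsInd on SA n / SB n
  have hint : ∀ (n : ℕ) (C' : Finset (EuclideanSpace ℝ (Fin d)))
      (s : Set (Fin n → EuclideanSpace ℝ (Fin d))), volume s < ⊤ →
      IntegrableOn (fun x => hsInd d R C' x) s := by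
    intro n C' s hs
    refine ((integrableOn_const (C := (1 : ℝ)) hs.ne)).mono'
      ((hsInd_meas d R C' n).aestronglyMeasurable) ?_
    filter_upwards with x
    rw [Real.norm_eq_abs, abs_of_nonneg (hsInd_nonneg d R C' x)]
    exact hsInd_le_one d R C' x
  set vB := (volume B).toReal with hvB
  have hvB0 : 0 ≤ vB := ENNReal.toReal_nonneg
  -- termwise bound for the B side
  have hboundB : ∀ n : ℕ,
      (lam ^ n / n.factorial) * ∫ x in SB n, hsInd d R CB x ≤ (lam * vB) ^ n / n.factorial := by
    intro n
    have h1 : ∫ x in SB n, hsInd d R CB x ≤ ∫ _ in SB n, (1 : ℝ) :=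
      integral_mono (hint n CB (SB n) (hfinB n)) (integrableOn_const (hfinB n).ne)
        (fun x => hsInd_le_one d R CB x)
    rw [setIntegral_const, smul_eq_mul, mul_one] at h1
    have h2 : (volume (SB n)).toReal = vB ^ n := by
      rw [hvolB n, ENNReal.toReal_pow]
    rw [measureReal_def, h2] at h1
    calc lam ^ n / n.factorial * ∫ x in SB n, hsInd d R CB x
        ≤ lam ^ n / n.factorial * vB ^ n :=
          mul_le_mul_of_nonneg_left h1 (div_nonneg (pow_nonneg hlam n) (Nat.cast_nonneg _))
      _ = (lam * vB) ^ n / n.factorial := by rw [mul_pow]; ring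
  -- termwise comparison A ≤ B
  have hterm : ∀ n : ℕ,
      (lam ^ n / n.factorial) * ∫ x in SA n, hsInd d R CA x ≤
      (lam ^ n / n.factorial) * ∫ x in SB n, hsInd d R CB x := by
    intro n
    refine mul_le_mul_of_nonneg_left ?_ (div_nonneg (pow_nonneg hlam n) (Nat.cast_nonneg _))
    calc ∫ x in SA n, hsInd d R CA x
        ≤ ∫ x in SA n, hsInd d R CB x :=
          integral_mono (hint n CA (SA n) (hfinA n)) (hint n CB (SA n) (hfinA n))
            (fun x => hsInd_mono d R hCsub x)
      _ ≤ ∫ x in SB n, hsInd d R CB x := by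
          refine setIntegral_mono_set (hint n CB (SB n) (hfinB n)) ?_
            (HasSubset.Subset.eventuallyLE (hSAB n))
          filter_upwards with x using hsInd_nonneg d R CB x
  have htermA_nonneg : ∀ n : ℕ,
      0 ≤ (lam ^ n / n.factorial) * ∫ x in SA n, hsInd d R CA x := fun n =>
    mul_nonneg (div_nonneg (pow_nonneg hlam n) (Nat.cast_nonneg _))
      (integral_nonneg fun x => hsInd_nonneg d R CA x)
  have hsummable0 : Summable fun n : ℕ => (lam * vB) ^ n / n.factorial :=
    Real.summable_pow_div_factorial (lam * vB)
  have hsumB : Summable fun n : ℕ =>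
      (lam ^ n / n.factorial) * ∫ x in SB n, hsInd d R CB x :=
    Summable.of_nonneg_of_le
      (fun n => le_trans (htermA_nonneg n) (hterm n)) hboundB hsummable0
  have hsumA : Summable fun n : ℕ =>
      (lam ^ n / n.factorial) * ∫ x in SA n, hsInd d R CA x :=
    Summable.of_nonneg_of_le htermA_nonneg
      (fun n => le_trans (hterm n) (hboundB n)) hsummable0
  exact Summable.tsum_le_tsum hterm hsumA hsumB
end

section
/- DLR-type factorisation of the partition function over a disjoint splitting of the domain: let A, B ⊆ ℝ^d be disjoint bounded Borel sets, C ⊆ ℝ^d a finite set disjoint from A ∪ B, λ ≥ 0 and R ≥ 0. Then Z(A ∪ B, C, λ) = Σ_{k=0}^∞ (λ^k/k!) ∫_{A^k} h_k(x|C) · Z(B, C ∪ {x_1, …, x_k}, λ) dx, where the integral over A^k is with respect to k-fold Lebesgue measure. -/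
open MeasureTheory
open scoped Classical

open scoped ENNReal

namespace HSAux

abbrev Pt (d : ℕ) := EuclideanSpace ℝ (Fin d)

variable {d : ℕ}

/-- permutation-invariant form of the hard-core condition. -/
def Ok (d : ℕ) (R : ℝ) (C : Finset (Pt d)) {ι : Type} (x : ι → Pt d) : Prop :=
  (∀ i j : ι, i ≠ j → R < dist (x i) (x j)) ∧ (∀ i, ∀ c ∈ C, R < dist (x i) c)

noncomputable def okE (d : ℕ) (R : ℝ) (C : Finset (Pt d)) {ι : Type}
    (x : ι → Pt d) : ℝ≥0∞ :=
  if Ok d R C x then 1 else 0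

variable {R lam : ℝ} {C : Finset (Pt d)}

lemma ok_iff_lt {n : ℕ} (x : Fin n → Pt d) :
    ((∀ i j : Fin n, i < j → R < dist (x i) (x j)) ∧
      (∀ i : Fin n, ∀ c ∈ C, R < dist (x i) c)) ↔ Ok d R C x := by
  constructor
  · rintro ⟨h1, h2⟩
    refine ⟨fun i j hij => ?_, h2⟩
    rcases lt_or_gt_of_ne hij with h | h
    · exact h1 i j h
    · rw [dist_comm]; exact h1 j i h
  · rintro ⟨h1, h2⟩
    exact ⟨fun i j hij => h1 i j hij.ne, h2⟩

lemma hsInd_eq {n : ℕ} (x : Fin n → Pt d) :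
    hsInd d R C x = (okE d R C x).toReal := by
  by_cases h : Ok d R C x
  · rw [okE, if_pos h, hsInd, if_pos ((ok_iff_lt x).2 h)]; simp
  · rw [okE, if_neg h, hsInd, if_neg (fun hc => h ((ok_iff_lt x).1 hc))]; simp

lemma okE_le_one {ι : Type} (x : ι → Pt d) : okE d R C x ≤ 1 := by
  rw [okE]; split <;> simp

lemma okE_ne_top {ι : Type} (x : ι → Pt d) : okE d R C x ≠ ∞ :=
  ne_top_of_le_ne_top ENNReal.one_ne_top (okE_le_one x)

lemma measurableSet_ok {ι : Type} [Fintype ι] :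
    MeasurableSet {x : ι → Pt d | Ok d R C x} := by
  have : {x : ι → Pt d | Ok d R C x} =
      (⋂ i, ⋂ j, ⋂ (_ : i ≠ j), {x : ι → Pt d | R < dist (x i) (x j)}) ∩
        ⋂ i, ⋂ c ∈ C, {x : ι → Pt d | R < dist (x i) c} := by
    ext x
    simp [Ok, Set.mem_iInter]
  rw [this]
  have hcont : ∀ i j : ι, Measurable fun x : ι → Pt d => dist (x i) (x j) := fun i j =>
    ((continuous_apply i).dist (continuous_apply j)).measurable
  refine MeasurableSet.inter ?_ ?_
  · exact MeasurableSet.iInter fun i => MeasurableSet.iInter fun j =>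
      MeasurableSet.iInter fun _ => measurableSet_lt measurable_const (hcont i j)
  · refine MeasurableSet.iInter fun i => MeasurableSet.biInter C.countable_toSet fun c _ => ?_
    exact measurableSet_lt measurable_const
      (((continuous_apply i).dist continuous_const).measurable)

lemma measurable_okE {ι : Type} [Fintype ι] :
    Measurable fun x : ι → Pt d => okE d R C x :=
  Measurable.ite measurableSet_ok measurable_const measurable_const

lemma ok_comp {ι κ : Type} (e : ι ≃ κ) (x : κ → Pt d) :
    Ok d R C (x ∘ e) ↔ Ok d R C x := by
  constructor
  · rintro ⟨h1, h2⟩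
    refine ⟨fun i j hij => ?_, fun i c hc => ?_⟩
    · have := h1 (e.symm i) (e.symm j) (fun hc => hij (by simpa using congrArg e hc))
      simpa using this
    · simpa using h2 (e.symm i) c hc
  · rintro ⟨h1, h2⟩
    exact ⟨fun i j hij => h1 (e i) (e j) (fun hc => hij (e.injective hc)),
      fun i c hc => h2 (e i) c hc⟩

lemma okE_comp {ι κ : Type} (e : ι ≃ κ) (x : κ → Pt d) :
    okE d R C (x ∘ e) = okE d R C x := by
  by_cases h : Ok d R C x
  · rw [okE, if_pos ((ok_comp e x).2 h), okE, if_pos h]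
  · rw [okE, if_neg (fun hc => h ((ok_comp e x).1 hc)), okE, if_neg h]

lemma ok_sum_elim {k m : ℕ} (x : Fin k → Pt d) (y : Fin m → Pt d) :
    Ok d R C (Sum.elim x y) ↔
      Ok d R C x ∧ Ok d R (C ∪ Finset.image x Finset.univ) y := by
  constructor
  · rintro ⟨hp, hc⟩
    refine ⟨⟨fun i j hij => hp (.inl i) (.inl j) (by simp [hij]),
      fun i c hcm => hc (.inl i) c hcm⟩,
      ⟨fun i j hij => hp (.inr i) (.inr j) (by simp [hij]), ?_⟩⟩
    intro i c hcm
    rcases Finset.mem_union.1 hcm with h | h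
    · exact hc (.inr i) c h
    · obtain ⟨a, -, rfl⟩ := Finset.mem_image.1 h
      exact hp (.inr i) (.inl a) (by simp)
  · rintro ⟨⟨hxp, hxc⟩, ⟨hyp, hyc⟩⟩
    constructor
    · rintro (i | i) (j | j) hij
      · exact hxp i j (by simpa using hij)
      · have := hyc j (x i)
          (Finset.mem_union_right _ (Finset.mem_image_of_mem x (Finset.mem_univ i)))
        simpa [dist_comm] using this
      · exact hyc i (x j)
          (Finset.mem_union_right _ (Finset.mem_image_of_mem x (Finset.mem_univ j)))
      · exact hyp i j (by simpa using hij)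
    · rintro (i | i) c hcm
      · exact hxc i c hcm
      · exact hyc i c (Finset.mem_union_left _ hcm)

lemma okE_sum_elim {k m : ℕ} (x : Fin k → Pt d) (y : Fin m → Pt d) :
    okE d R C (Sum.elim x y) =
      okE d R C x * okE d R (C ∪ Finset.image x Finset.univ) y := by
  by_cases h1 : Ok d R C x <;>
    by_cases h2 : Ok d R (C ∪ Finset.image x Finset.univ) y <;>
      simp [okE, ok_sum_elim x y, h1, h2]

lemma ok_union_image_iff {k m : ℕ} (x : Fin k → Pt d) (y : Fin m → Pt d) :
    Ok d R (C ∪ Finset.image x Finset.univ) y ↔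
      Ok d R C y ∧ ∀ (i : Fin m) (j : Fin k), R < dist (y i) (x j) := by
  constructor
  · rintro ⟨h1, h2⟩
    refine ⟨⟨h1, fun i c hc => h2 i c (Finset.mem_union_left _ hc)⟩, fun i j => ?_⟩
    exact h2 i (x j) (Finset.mem_union_right _ (Finset.mem_image_of_mem x (Finset.mem_univ j)))
  · rintro ⟨⟨h1, h2⟩, h3⟩
    refine ⟨h1, fun i c hc => ?_⟩
    rcases Finset.mem_union.1 hc with h | h
    · exact h2 i c h
    · obtain ⟨a, -, rfl⟩ := Finset.mem_image.1 h
      exact h3 i a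

lemma measurable_okE_pair {k m : ℕ} :
    Measurable fun p : (Fin k → Pt d) × (Fin m → Pt d) =>
      okE d R (C ∪ Finset.image p.1 Finset.univ) p.2 := by
  have heq : ∀ p : (Fin k → Pt d) × (Fin m → Pt d),
      okE d R (C ∪ Finset.image p.1 Finset.univ) p.2 =
        if (Ok d R C p.2 ∧ ∀ (i : Fin m) (j : Fin k), R < dist (p.2 i) (p.1 j))
          then 1 else 0 := by
    intro p
    by_cases h : Ok d R C p.2 ∧ ∀ (i : Fin m) (j : Fin k), R < dist (p.2 i) (p.1 j)
    · rw [okE, if_pos ((ok_union_image_iff p.1 p.2).2 h), if_pos h]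
    · rw [okE, if_neg (fun hc => h ((ok_union_image_iff p.1 p.2).1 hc)), if_neg h]
  simp only [heq]
  have hset : MeasurableSet {p : (Fin k → Pt d) × (Fin m → Pt d) |
      Ok d R C p.2 ∧ ∀ (i : Fin m) (j : Fin k), R < dist (p.2 i) (p.1 j)} := by
    have : {p : (Fin k → Pt d) × (Fin m → Pt d) |
        Ok d R C p.2 ∧ ∀ (i : Fin m) (j : Fin k), R < dist (p.2 i) (p.1 j)} =
        (Prod.snd ⁻¹' {y : Fin m → Pt d | Ok d R C y}) ∩
          ⋂ i, ⋂ j, {p : (Fin k → Pt d) × (Fin m → Pt d) | R < dist (p.2 i) (p.1 j)} := by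
      ext p; simp [Set.mem_iInter]
    rw [this]
    refine (measurableSet_ok.preimage measurable_snd).inter ?_
    refine MeasurableSet.iInter fun i => MeasurableSet.iInter fun j => ?_
    exact measurableSet_lt measurable_const
      (((continuous_apply i).comp continuous_snd).dist
        ((continuous_apply j).comp continuous_fst)).measurable
  exact Measurable.ite hset measurable_const measurable_const

/-! ### Integration layer -/

lemma setLIntegral_pi_eq {ι : Type} [Fintype ι] (D : ι → Set (Pt d))
    (hD : ∀ i, MeasurableSet (D i)) (g : (ι → Pt d) → ℝ≥0∞) :
    ∫⁻ z in Set.univ.pi D, g z =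
      ∫⁻ z, g z * ∏ i, (D i).indicator 1 (z i) := by
  rw [← lintegral_indicator (MeasurableSet.univ_pi hD)]
  congr 1; funext z
  by_cases hz : z ∈ Set.univ.pi D
  · rw [Set.indicator_of_mem hz]
    have h1 : ∀ i, (D i).indicator (1 : Pt d → ℝ≥0∞) (z i) = 1 := fun i =>
      Set.indicator_of_mem (hz i (Set.mem_univ i)) 1
    rw [Finset.prod_congr rfl (fun i _ => h1 i), Finset.prod_const_one, mul_one]
  · rw [Set.indicator_of_notMem hz]
    obtain ⟨i, hi⟩ : ∃ i, z i ∉ D i := by simpa [Set.mem_pi] using hz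
    rw [Finset.prod_eq_zero (Finset.mem_univ i) (Set.indicator_of_notMem hi 1), mul_zero]

/-- The ENNReal-valued partition function. -/
noncomputable def ZE (d : ℕ) (R lam : ℝ) (B : Set (Pt d)) (C : Finset (Pt d)) : ℝ≥0∞ :=
  ∑' n : ℕ, ENNReal.ofReal (lam ^ n / n.factorial) *
    ∫⁻ x : Fin n → Pt d in Set.univ.pi (fun _ : Fin n => B), okE d R C x

lemma setLIntegral_okE_le (D : Set (Pt d)) {n : ℕ} :
    (∫⁻ x : Fin n → Pt d in Set.univ.pi (fun _ : Fin n => D), okE d R C x) ≤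
      volume D ^ n := by
  calc (∫⁻ x : Fin n → Pt d in Set.univ.pi (fun _ : Fin n => D), okE d R C x)
      ≤ ∫⁻ _x : Fin n → Pt d in Set.univ.pi (fun _ : Fin n => D), 1 :=
        lintegral_mono fun x => okE_le_one x
    _ = volume (Set.univ.pi (fun _ : Fin n => D)) := setLIntegral_one _
    _ = ∏ _i : Fin n, volume D := volume_pi_pi _
    _ = volume D ^ n := by simp

lemma setLIntegral_okE_ne_top {D : Set (Pt d)} (hD : volume D ≠ ∞) {n : ℕ} :
    (∫⁻ x : Fin n → Pt d in Set.univ.pi (fun _ : Fin n => D), okE d R C x) ≠ ∞ :=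
  ne_top_of_le_ne_top (ENNReal.pow_ne_top hD) (setLIntegral_okE_le D)

lemma coef_nonneg (hlam : 0 ≤ lam) (n : ℕ) : 0 ≤ lam ^ n / n.factorial :=
  div_nonneg (pow_nonneg hlam n) (Nat.cast_nonneg _)

/-- Uniform bound for the partition function, independent of the boundary condition. -/
noncomputable def ZEbound (d : ℕ) (lam : ℝ) (D : Set (Pt d)) : ℝ≥0∞ :=
  ∑' n : ℕ, ENNReal.ofReal (lam ^ n / n.factorial) * volume D ^ n

lemma ZE_le_bound (D : Set (Pt d)) : ZE d R lam D C ≤ ZEbound d lam D :=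
  ENNReal.tsum_le_tsum fun n => mul_le_mul_right (setLIntegral_okE_le D) _

lemma ZEbound_ne_top {D : Set (Pt d)} (hD : volume D ≠ ∞) (hlam : 0 ≤ lam) :
    ZEbound d lam D ≠ ∞ := by
  have hv : volume D = ENNReal.ofReal ((volume D).toReal) := (ENNReal.ofReal_toReal hD).symm
  have h1 : ZEbound d lam D =
      ∑' n : ℕ, ENNReal.ofReal ((lam * (volume D).toReal) ^ n / n.factorial) := by
    refine tsum_congr fun n => ?_
    conv_lhs => rw [hv]
    rw [← ENNReal.ofReal_pow ENNReal.toReal_nonneg,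
      ← ENNReal.ofReal_mul (coef_nonneg hlam n)]
    congr 1
    rw [mul_pow]; ring
  rw [h1, ← ENNReal.ofReal_tsum_of_nonneg
    (fun n => coef_nonneg (mul_nonneg hlam ENNReal.toReal_nonneg) n)
    (Real.summable_pow_div_factorial _)]
  exact ENNReal.ofReal_ne_top

lemma ZE_ne_top {D : Set (Pt d)} (hD : volume D ≠ ∞) (hlam : 0 ≤ lam) :
    ZE d R lam D C ≠ ∞ :=
  ne_top_of_le_ne_top (ZEbound_ne_top hD hlam) (ZE_le_bound D)

lemma integral_hsInd {D : Set (Pt d)} (hDm : MeasurableSet D) {n : ℕ} :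
    ∫ x : Fin n → Pt d in Set.univ.pi (fun _ : Fin n => D), hsInd d R C x =
      (∫⁻ x : Fin n → Pt d in Set.univ.pi (fun _ : Fin n => D), okE d R C x).toReal := by
  have hOk : MeasurableSet {x : Fin n → Pt d | Ok d R C x} := measurableSet_ok
  have h1 : ∀ x : Fin n → Pt d,
      hsInd d R C x = Set.indicator {x : Fin n → Pt d | Ok d R C x} 1 x := by
    intro x
    by_cases h : Ok d R C x <;> simp [hsInd_eq, okE, Set.indicator_apply, h]
  have h2 : ∀ x : Fin n → Pt d,
      okE d R C x = Set.indicator {x : Fin n → Pt d | Ok d R C x} 1 x := by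
    intro x
    by_cases h : Ok d R C x <;> simp [okE, Set.indicator_apply, h]
  calc ∫ x : Fin n → Pt d in Set.univ.pi (fun _ : Fin n => D), hsInd d R C x
      = ∫ x : Fin n → Pt d in Set.univ.pi (fun _ : Fin n => D),
          Set.indicator {x : Fin n → Pt d | Ok d R C x} 1 x :=
        integral_congr_ae (Filter.Eventually.of_forall h1)
    _ = ((volume.restrict (Set.univ.pi (fun _ : Fin n => D)))
          {x : Fin n → Pt d | Ok d R C x}).toReal := integral_indicator_one hOk
    _ = (∫⁻ x : Fin n → Pt d in Set.univ.pi (fun _ : Fin n => D), okE d R C x).toReal := by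
        rw [show (∫⁻ x : Fin n → Pt d in Set.univ.pi (fun _ : Fin n => D), okE d R C x) =
          ∫⁻ x : Fin n → Pt d in Set.univ.pi (fun _ : Fin n => D),
            Set.indicator {x : Fin n → Pt d | Ok d R C x} 1 x from
          lintegral_congr h2, lintegral_indicator_one hOk]

lemma partFun_eq {D : Set (Pt d)} (hDm : MeasurableSet D) (hD : volume D ≠ ∞)
    (hlam : 0 ≤ lam) :
    partFun d R lam D C = (ZE d R lam D C).toReal := by
  have h1 : ∀ n : ℕ, (lam ^ n / n.factorial : ℝ) *
      ∫ x : Fin n → Pt d in Set.univ.pi (fun _ : Fin n => D), hsInd d R C x =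
      (ENNReal.ofReal (lam ^ n / n.factorial) *
        ∫⁻ x : Fin n → Pt d in Set.univ.pi (fun _ : Fin n => D), okE d R C x).toReal := by
    intro n
    rw [integral_hsInd hDm, ENNReal.toReal_mul, ENNReal.toReal_ofReal (coef_nonneg hlam n)]
  rw [partFun]
  calc (∑' n : ℕ, (lam ^ n / n.factorial : ℝ) *
        ∫ x : Fin n → Pt d in Set.univ.pi (fun _ : Fin n => D), hsInd d R C x)
      = ∑' n : ℕ, (ENNReal.ofReal (lam ^ n / n.factorial) *
          ∫⁻ x : Fin n → Pt d in Set.univ.pi (fun _ : Fin n => D), okE d R C x).toReal :=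
        tsum_congr h1
    _ = (ZE d R lam D C).toReal := by
        rw [ZE, ENNReal.tsum_toReal_eq]
        intro n
        exact ENNReal.mul_ne_top ENNReal.ofReal_ne_top (setLIntegral_okE_ne_top hD)

/-! ### The combinatorial core -/

variable {A B : Set (Pt d)}

/-- inner partition-function integral with boundary condition `C ∪ x(Fin k)`. -/
noncomputable def Ifun (d : ℕ) (R : ℝ) (C : Finset (Pt d)) (B : Set (Pt d)) (k m : ℕ)
    (x : Fin k → Pt d) : ℝ≥0∞ :=
  ∫⁻ y : Fin m → Pt d in Set.univ.pi (fun _ : Fin m => B),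
    okE d R (C ∪ Finset.image x Finset.univ) y

lemma measurable_Ifun (k m : ℕ) : Measurable (Ifun d R C B k m) :=
  Measurable.lintegral_prod_right (measurable_okE_pair (C := C))

lemma ZE_eq_tsum_Ifun (k : ℕ) (x : Fin k → Pt d) :
    ZE d R lam B (C ∪ Finset.image x Finset.univ) =
      ∑' m : ℕ, ENNReal.ofReal (lam ^ m / m.factorial) * Ifun d R C B k m x := rfl

lemma measurable_ZEx (k : ℕ) :
    Measurable fun x : Fin k → Pt d =>
      ZE d R lam B (C ∪ Finset.image x Finset.univ) := by
  simp only [ZE_eq_tsum_Ifun]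
  exact Measurable.ennreal_tsum fun m => (measurable_Ifun k m).const_mul _

lemma ind_le_one (D : Set (Pt d)) (z : Pt d) : D.indicator (1 : Pt d → ℝ≥0∞) z ≤ 1 := by
  by_cases h : z ∈ D
  · simp [Set.indicator_of_mem h]
  · simp [Set.indicator_of_notMem h]

lemma prod_ind_ne_top {ι : Type} [Fintype ι] (D : ι → Set (Pt d)) (z : ι → Pt d) :
    (∏ i, (D i).indicator (1 : Pt d → ℝ≥0∞) (z i)) ≠ ∞ :=
  ne_top_of_le_ne_top ENNReal.one_ne_top
    (Finset.prod_le_one (fun i _ => zero_le) (fun i _ => ind_le_one (D i) (z i)))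

lemma measurable_okE_mul_prod {ι : Type} [Fintype ι] (D : ι → Set (Pt d))
    (hD : ∀ i, MeasurableSet (D i)) :
    Measurable fun z : ι → Pt d =>
      okE d R C z * ∏ i, (D i).indicator (1 : Pt d → ℝ≥0∞) (z i) := by
  refine measurable_okE.mul ?_
  refine Finset.measurable_prod _ fun i _ => ?_
  exact (measurable_one.indicator (hD i)).comp (measurable_pi_apply i)

/-- The summand in the binomial decomposition. -/
noncomputable def W (d : ℕ) (R : ℝ) (A B : Set (Pt d)) (C : Finset (Pt d))
    (k m : ℕ) : ℝ≥0∞ :=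
  ∫⁻ x : Fin k → Pt d,
    (okE d R C x * ∏ a, A.indicator (1 : Pt d → ℝ≥0∞) (x a)) * Ifun d R C B k m x

lemma step3a (hAB : Disjoint A B) (hAm : MeasurableSet A) (hBm : MeasurableSet B) {n : ℕ} :
    (∫⁻ z : Fin n → Pt d, okE d R C z * ∏ i, (A ∪ B).indicator (1 : Pt d → ℝ≥0∞) (z i)) =
      ∑ s ∈ (Finset.univ : Finset (Fin n)).powerset,
        ∫⁻ z : Fin n → Pt d,
          okE d R C z * ∏ i, (if i ∈ s then A else B).indicator (1 : Pt d → ℝ≥0∞) (z i) := by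
  have hpt : ∀ z : Fin n → Pt d,
      okE d R C z * ∏ i, (A ∪ B).indicator (1 : Pt d → ℝ≥0∞) (z i) =
      ∑ s ∈ (Finset.univ : Finset (Fin n)).powerset,
        okE d R C z * ∏ i, (if i ∈ s then A else B).indicator (1 : Pt d → ℝ≥0∞) (z i) := by
    intro z
    rw [← Finset.mul_sum]
    congr 1
    calc (∏ i, (A ∪ B).indicator (1 : Pt d → ℝ≥0∞) (z i))
        = ∏ i, (A.indicator (1 : Pt d → ℝ≥0∞) (z i) + B.indicator 1 (z i)) := by
          refine Finset.prod_congr rfl fun i _ => ?_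
          exact congrFun (Set.indicator_union_of_disjoint hAB 1) (z i)
      _ = ∑ s ∈ (Finset.univ : Finset (Fin n)).powerset,
            (∏ i ∈ s, A.indicator (1 : Pt d → ℝ≥0∞) (z i)) *
              ∏ i ∈ Finset.univ \ s, B.indicator 1 (z i) := Finset.prod_add _ _ _
      _ = ∑ s ∈ (Finset.univ : Finset (Fin n)).powerset,
            ∏ i, (if i ∈ s then A else B).indicator (1 : Pt d → ℝ≥0∞) (z i) := by
          refine Finset.sum_congr rfl fun s _ => ?_
          rw [show (∏ i, (if i ∈ s then A else B).indicator (1 : Pt d → ℝ≥0∞) (z i)) =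
              ∏ i, (if i ∈ s then A.indicator (1 : Pt d → ℝ≥0∞) (z i)
                else B.indicator 1 (z i)) from
            Finset.prod_congr rfl fun i _ => by split <;> rfl]
          rw [Finset.prod_ite]
          congr 1
          · congr 1
            ext i; simp
          · congr 1
            ext i; simp
  rw [lintegral_congr hpt, lintegral_finset_sum]
  intro s _
  exact measurable_okE_mul_prod _ (fun i => by split <;> [exact hAm; exact hBm])

lemma step3b (hAm : MeasurableSet A) (hBm : MeasurableSet B) {n : ℕ} (s : Finset (Fin n)) :
    (∫⁻ z : Fin n → Pt d,
        okE d R C z * ∏ i, (if i ∈ s then A else B).indicator (1 : Pt d → ℝ≥0∞) (z i)) =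
      W d R A B C s.card sᶜ.card := by
  set k := s.card with hk
  set m := sᶜ.card with hm
  have hsc : s.card = k := rfl
  have hmc : sᶜ.card = m := rfl
  let f : Fin k ⊕ Fin m → Fin n :=
    Sum.elim (fun a => s.orderEmbOfFin hsc a) (fun b => sᶜ.orderEmbOfFin hmc b)
  have hf1 : ∀ a, f (Sum.inl a) ∈ s := fun a => Finset.orderEmbOfFin_mem _ _ _
  have hf2 : ∀ b, f (Sum.inr b) ∉ s := fun b =>
    Finset.mem_compl.1 (Finset.orderEmbOfFin_mem sᶜ hmc b)
  have hinj : Function.Injective f := by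
    rintro (a | a) (b | b) hab
    · exact congrArg Sum.inl ((s.orderEmbOfFin hsc).injective hab)
    · exact absurd (hf1 a) (by rw [show f (Sum.inl a) = f (Sum.inr b) from hab]; exact hf2 b)
    · exact absurd (hf1 b) (by rw [show f (Sum.inl b) = f (Sum.inr a) from hab.symm]; exact hf2 a)
    · exact congrArg Sum.inr ((sᶜ.orderEmbOfFin hmc).injective hab)
  have hsurj : Function.Surjective f := by
    intro i
    by_cases hi : i ∈ s
    · have : i ∈ Set.range (s.orderEmbOfFin hsc) := by
        rw [Finset.range_orderEmbOfFin]; exact hi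
      obtain ⟨a, ha⟩ := this
      exact ⟨Sum.inl a, ha⟩
    · have : i ∈ Set.range (sᶜ.orderEmbOfFin hmc) := by
        rw [Finset.range_orderEmbOfFin]; simpa using hi
      obtain ⟨b, hb⟩ := this
      exact ⟨Sum.inr b, hb⟩
  let e : (Fin k ⊕ Fin m) ≃ Fin n := Equiv.ofBijective f ⟨hinj, hsurj⟩
  have he1 : ∀ a, e (Sum.inl a) ∈ s := hf1
  have he2 : ∀ b, e (Sum.inr b) ∉ s := hf2
  let T := (MeasurableEquiv.sumPiEquivProdPi (fun _ : Fin k ⊕ Fin m => Pt d)).symm.trans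
      (MeasurableEquiv.piCongrLeft (fun _ : Fin n => Pt d) e)
  have hT : MeasurePreserving (⇑T) volume volume :=
    (volume_measurePreserving_piCongrLeft (fun _ : Fin n => Pt d) e).comp
      (volume_measurePreserving_sumPiEquivProdPi_symm (fun _ : Fin k ⊕ Fin m => Pt d))
  have hGmeas : Measurable fun z : Fin n → Pt d =>
      okE d R C z * ∏ i, (if i ∈ s then A else B).indicator (1 : Pt d → ℝ≥0∞) (z i) :=
    measurable_okE_mul_prod _ (fun i => by split <;> [exact hAm; exact hBm])
  have hTeval : ∀ (p : (Fin k → Pt d) × (Fin m → Pt d)) (q : Fin k ⊕ Fin m),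
      T p (e q) = Sum.elim p.1 p.2 q := by
    rintro ⟨x, y⟩ q
    show (Equiv.piCongrLeft (fun _ : Fin n => Pt d) e)
        ((Equiv.sumPiEquivProdPi (fun _ : Fin k ⊕ Fin m => Pt d)).symm (x, y)) (e q) = _
    rw [Equiv.piCongrLeft_apply_apply]
    cases q <;> rfl
  have hTfun : ∀ p : (Fin k → Pt d) × (Fin m → Pt d),
      T p = Sum.elim p.1 p.2 ∘ ⇑e.symm := by
    intro p; funext i
    conv_lhs => rw [← e.apply_symm_apply i]
    rw [hTeval]
    rfl
  have hpoint : ∀ (x : Fin k → Pt d) (y : Fin m → Pt d),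
      (okE d R C (T (x, y)) *
          ∏ i, (if i ∈ s then A else B).indicator (1 : Pt d → ℝ≥0∞) ((T (x, y)) i))
        = (okE d R C x * ∏ a, A.indicator (1 : Pt d → ℝ≥0∞) (x a)) *
          (okE d R (C ∪ Finset.image x Finset.univ) y *
            ∏ b, B.indicator (1 : Pt d → ℝ≥0∞) (y b)) := by
    intro x y
    have h1 : okE d R C (T (x, y)) =
        okE d R C x * okE d R (C ∪ Finset.image x Finset.univ) y := by
      rw [hTfun (x, y), okE_comp e.symm (Sum.elim x y), okE_sum_elim]
    have h2 : (∏ i, (if i ∈ s then A else B).indicator (1 : Pt d → ℝ≥0∞) ((T (x, y)) i))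
        = (∏ a, A.indicator (1 : Pt d → ℝ≥0∞) (x a)) *
          ∏ b, B.indicator (1 : Pt d → ℝ≥0∞) (y b) := by
      rw [← Equiv.prod_comp e
        (fun i => (if i ∈ s then A else B).indicator (1 : Pt d → ℝ≥0∞) ((T (x, y)) i))]
      rw [Fintype.prod_sum_type]
      congr 1
      · refine Finset.prod_congr rfl fun a _ => ?_
        rw [hTeval (x, y) (Sum.inl a), if_pos (he1 a)]
        rfl
      · refine Finset.prod_congr rfl fun b _ => ?_
        rw [hTeval (x, y) (Sum.inr b), if_neg (he2 b)]
        rfl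
    rw [h1, h2]; ring
  calc (∫⁻ z : Fin n → Pt d,
        okE d R C z * ∏ i, (if i ∈ s then A else B).indicator (1 : Pt d → ℝ≥0∞) (z i))
      = ∫⁻ p : (Fin k → Pt d) × (Fin m → Pt d),
          okE d R C (T p) *
            ∏ i, (if i ∈ s then A else B).indicator (1 : Pt d → ℝ≥0∞) ((T p) i) :=
        (hT.lintegral_comp hGmeas).symm
    _ = ∫⁻ x : Fin k → Pt d, ∫⁻ y : Fin m → Pt d,
          okE d R C (T (x, y)) *
            ∏ i, (if i ∈ s then A else B).indicator (1 : Pt d → ℝ≥0∞) ((T (x, y)) i) := by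
        have hmeas2 : Measurable fun p : (Fin k → Pt d) × (Fin m → Pt d) =>
            okE d R C (T p) *
              ∏ i, (if i ∈ s then A else B).indicator (1 : Pt d → ℝ≥0∞) ((T p) i) :=
          hGmeas.comp T.measurable
        rw [Measure.volume_eq_prod, lintegral_prod _ hmeas2.aemeasurable]
    _ = W d R A B C k m := by
        rw [W]
        refine lintegral_congr fun x => ?_
        rw [lintegral_congr (hpoint x)]
        rw [lintegral_const_mul' _ _
          (ENNReal.mul_ne_top (okE_ne_top x) (prod_ind_ne_top (fun _ => A) x))]
        congr 1
        rw [Ifun, setLIntegral_pi_eq (fun _ : Fin m => B) (fun _ => hBm)]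

lemma step3c {n : ℕ} (g : ℕ → ℝ≥0∞) :
    (∑ s ∈ (Finset.univ : Finset (Fin n)).powerset, g s.card)
      = ∑ j ∈ Finset.range (n + 1), (n.choose j : ℝ≥0∞) * g j := by
  rw [Finset.sum_powerset, Finset.card_univ, Fintype.card_fin]
  refine Finset.sum_congr rfl fun j _ => ?_
  rw [Finset.sum_powersetCard, Finset.card_univ, Fintype.card_fin, nsmul_eq_mul]

/-! ### The ENNReal-level DLR identity -/

lemma coef_split (hlam : 0 ≤ lam) {j n : ℕ} (hj : j ≤ n) :
    ENNReal.ofReal (lam ^ n / n.factorial) * (n.choose j : ℝ≥0∞) =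
      ENNReal.ofReal (lam ^ j / j.factorial) *
        ENNReal.ofReal (lam ^ (n - j) / (n - j).factorial) := by
  rw [← ENNReal.ofReal_natCast, ← ENNReal.ofReal_mul (coef_nonneg hlam n),
    ← ENNReal.ofReal_mul (coef_nonneg hlam j)]
  congr 1
  have h1 : (lam ^ j) * lam ^ (n - j) = lam ^ n := by
    rw [← pow_add, Nat.add_sub_cancel' hj]
  have h2 : (n.choose j : ℝ) = n.factorial / (j.factorial * (n - j).factorial) :=
    Nat.cast_choose ℝ hj
  have hnf : (n.factorial : ℝ) ≠ 0 := Nat.cast_ne_zero.2 n.factorial_ne_zero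
  have hjf : (j.factorial : ℝ) ≠ 0 := Nat.cast_ne_zero.2 j.factorial_ne_zero
  have hmf : ((n - j).factorial : ℝ) ≠ 0 := Nat.cast_ne_zero.2 (n - j).factorial_ne_zero
  rw [h2, ← h1]
  field_simp

lemma ZE_union (hAm : MeasurableSet A) (hBm : MeasurableSet B) (hAB : Disjoint A B)
    (hlam : 0 ≤ lam) :
    ZE d R lam (A ∪ B) C =
      ∑' k : ℕ, ENNReal.ofReal (lam ^ k / k.factorial) *
        ∫⁻ x : Fin k → Pt d in Set.univ.pi (fun _ : Fin k => A),
          okE d R C x * ZE d R lam B (C ∪ Finset.image x Finset.univ) := by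
  have hABm : MeasurableSet (A ∪ B) := hAm.union hBm
  set g : ℕ × ℕ → ℝ≥0∞ := fun p =>
    ENNReal.ofReal (lam ^ p.1 / p.1.factorial) *
      (ENNReal.ofReal (lam ^ p.2 / p.2.factorial) * W d R A B C p.1 p.2) with hg
  have h1 : ZE d R lam (A ∪ B) C = ∑' n : ℕ, ∑ j ∈ Finset.range (n + 1), g (j, n - j) := by
    rw [ZE]
    refine tsum_congr fun n => ?_
    rw [setLIntegral_pi_eq (fun _ : Fin n => A ∪ B) (fun _ => hABm), step3a hAB hAm hBm]
    rw [show (∑ s ∈ (Finset.univ : Finset (Fin n)).powerset,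
        ∫⁻ z : Fin n → Pt d,
          okE d R C z * ∏ i, (if i ∈ s then A else B).indicator (1 : Pt d → ℝ≥0∞) (z i)) =
      ∑ s ∈ (Finset.univ : Finset (Fin n)).powerset, W d R A B C s.card (n - s.card) from
      Finset.sum_congr rfl fun s _ => by
        rw [step3b hAm hBm s, Finset.card_compl, Fintype.card_fin]]
    rw [step3c (fun j => W d R A B C j (n - j)), Finset.mul_sum]
    refine Finset.sum_congr rfl fun j hj => ?_
    have hjn : j ≤ n := Nat.lt_succ_iff.1 (Finset.mem_range.1 hj)
    have hgj : g (j, n - j) = ENNReal.ofReal (lam ^ j / j.factorial) *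
        (ENNReal.ofReal (lam ^ (n - j) / (n - j).factorial) * W d R A B C j (n - j)) := rfl
    rw [hgj, ← mul_assoc, coef_split hlam hjn, mul_assoc]
  have h2 : (∑' n : ℕ, ∑ j ∈ Finset.range (n + 1), g (j, n - j)) =
      ∑' k : ℕ, ∑' m : ℕ, g (k, m) := by
    have e1 : ∀ n : ℕ, (∑ j ∈ Finset.range (n + 1), g (j, n - j)) =
        ∑ p ∈ Finset.HasAntidiagonal.antidiagonal n, g p := fun n =>
      (Finset.Nat.sum_antidiagonal_eq_sum_range_succ_mk g n).symm
    simp_rw [e1]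
    have e2 : ∀ n : ℕ, (∑ p ∈ Finset.HasAntidiagonal.antidiagonal n, g p) =
        ∑' p : (Finset.HasAntidiagonal.antidiagonal n : Finset (ℕ × ℕ)), g p := fun n =>
      (Finset.tsum_subtype _ g).symm
    simp_rw [e2]
    rw [← ENNReal.tsum_sigma' (fun p : (Σ n : ℕ, (Finset.HasAntidiagonal.antidiagonal n : Finset (ℕ × ℕ))) => g p.2)]
    rw [← ENNReal.tsum_prod']
    rw [← Finset.HasAntidiagonal.sigmaAntidiagonalEquivProd.tsum_eq g]
    rfl
  rw [h1, h2]
  refine tsum_congr fun k => ?_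
  have hkk : (∑' m : ℕ, g (k, m)) = ENNReal.ofReal (lam ^ k / k.factorial) *
      ∑' m : ℕ, ENNReal.ofReal (lam ^ m / m.factorial) * W d R A B C k m := by
    simp only [hg]
    exact ENNReal.tsum_mul_left
  rw [hkk]
  congr 1
  calc (∑' m : ℕ, ENNReal.ofReal (lam ^ m / m.factorial) * W d R A B C k m)
      = ∑' m : ℕ, ∫⁻ x : Fin k → Pt d,
          (okE d R C x * ∏ a, A.indicator (1 : Pt d → ℝ≥0∞) (x a)) *
            (ENNReal.ofReal (lam ^ m / m.factorial) * Ifun d R C B k m x) := by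
        refine tsum_congr fun m => ?_
        rw [W, ← lintegral_const_mul' _ _ ENNReal.ofReal_ne_top]
        exact lintegral_congr fun x => by ring
    _ = ∫⁻ x : Fin k → Pt d, ∑' m : ℕ,
          (okE d R C x * ∏ a, A.indicator (1 : Pt d → ℝ≥0∞) (x a)) *
            (ENNReal.ofReal (lam ^ m / m.factorial) * Ifun d R C B k m x) :=
        (lintegral_tsum fun m =>
          ((measurable_okE_mul_prod (fun _ : Fin k => A) (fun _ => hAm)).mul
            ((measurable_Ifun k m).const_mul _)).aemeasurable).symm
    _ = ∫⁻ x : Fin k → Pt d,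
          (okE d R C x * ZE d R lam B (C ∪ Finset.image x Finset.univ)) *
            ∏ a, A.indicator (1 : Pt d → ℝ≥0∞) (x a) := by
        refine lintegral_congr fun x => ?_
        rw [ENNReal.tsum_mul_left, ZE_eq_tsum_Ifun]
        ring
    _ = ∫⁻ x : Fin k → Pt d in Set.univ.pi (fun _ : Fin k => A),
          okE d R C x * ZE d R lam B (C ∪ Finset.image x Finset.univ) :=
        (setLIntegral_pi_eq (fun _ : Fin k => A) (fun _ => hAm) _).symm

/-! ### Final real-valued conversions -/

noncomputable def Lterm (d : ℕ) (R lam : ℝ) (A B : Set (Pt d)) (C : Finset (Pt d))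
    (k : ℕ) : ℝ≥0∞ :=
  ∫⁻ x : Fin k → Pt d in Set.univ.pi (fun _ : Fin k => A),
    okE d R C x * ZE d R lam B (C ∪ Finset.image x Finset.univ)

lemma Lterm_ne_top (hAvol : volume A ≠ ∞) (hBvol : volume B ≠ ∞) (hlam : 0 ≤ lam) (k : ℕ) :
    Lterm d R lam A B C k ≠ ∞ := by
  have hb : Lterm d R lam A B C k ≤
      ZEbound d lam B * volume (Set.univ.pi (fun _ : Fin k => A)) := by
    rw [← setLIntegral_const]
    refine lintegral_mono fun x => ?_
    calc okE d R C x * ZE d R lam B (C ∪ Finset.image x Finset.univ)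
        ≤ 1 * ZEbound d lam B := mul_le_mul' (okE_le_one x) (ZE_le_bound B)
      _ = ZEbound d lam B := one_mul _
  refine ne_top_of_le_ne_top (ENNReal.mul_ne_top (ZEbound_ne_top hBvol hlam) ?_) hb
  rw [volume_pi_pi, Finset.prod_const]
  exact ENNReal.pow_ne_top hAvol

lemma integral_term (hAm : MeasurableSet A) (hBm : MeasurableSet B)
    (hBvol : volume B ≠ ∞) (hlam : 0 ≤ lam) (k : ℕ) :
    ∫ x : Fin k → Pt d in Set.univ.pi (fun _ : Fin k => A),
      hsInd d R C x * partFun d R lam B (C ∪ Finset.image x Finset.univ) =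
      (Lterm d R lam A B C k).toReal := by
  have hFmeas : Measurable fun x : Fin k → Pt d =>
      okE d R C x * ZE d R lam B (C ∪ Finset.image x Finset.univ) :=
    measurable_okE.mul (measurable_ZEx k)
  have hFlt : ∀ x : Fin k → Pt d,
      okE d R C x * ZE d R lam B (C ∪ Finset.image x Finset.univ) < ∞ := fun x =>
    ENNReal.mul_lt_top (okE_ne_top x).lt_top (ZE_ne_top hBvol hlam).lt_top
  have hptw : ∀ x : Fin k → Pt d,
      hsInd d R C x * partFun d R lam B (C ∪ Finset.image x Finset.univ) =
        (okE d R C x * ZE d R lam B (C ∪ Finset.image x Finset.univ)).toReal := by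
    intro x
    rw [hsInd_eq, partFun_eq hBm hBvol hlam, ← ENNReal.toReal_mul]
  rw [integral_congr_ae (Filter.Eventually.of_forall hptw), Lterm]
  exact integral_toReal hFmeas.aemeasurable (Filter.Eventually.of_forall hFlt)

end HSAux

open HSAux in
theorem partFun_dlr' (d : ℕ) (R lam : ℝ) (hR : 0 ≤ R) (hlam : 0 ≤ lam)
    (A B : Set (EuclideanSpace ℝ (Fin d)))
    (hAm : MeasurableSet A) (hBm : MeasurableSet B)
    (hAb : Bornology.IsBounded A) (hBb : Bornology.IsBounded B)
    (hAB : Disjoint A B)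
    (C : Finset (EuclideanSpace ℝ (Fin d)))
    (hC : ∀ c ∈ C, c ∉ A ∪ B) :
    partFun d R lam (A ∪ B) C =
      ∑' k : ℕ, (lam ^ k / k.factorial) *
        ∫ x in Set.univ.pi (fun _ : Fin k => A),
          hsInd d R C x *
            partFun d R lam B (C ∪ Finset.image x Finset.univ) := by
  have hABm : MeasurableSet (A ∪ B) := hAm.union hBm
  have hAvol : volume A ≠ ∞ := hAb.measure_lt_top.ne
  have hBvol : volume B ≠ ∞ := hBb.measure_lt_top.ne
  have hABvol : volume (A ∪ B) ≠ ∞ := (hAb.union hBb).measure_lt_top.ne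
  rw [partFun_eq hABm hABvol hlam, ZE_union hAm hBm hAB hlam]
  have hterm : ∀ k : ℕ, (lam ^ k / k.factorial : ℝ) *
      ∫ x in Set.univ.pi (fun _ : Fin k => A),
        hsInd d R C x * partFun d R lam B (C ∪ Finset.image x Finset.univ) =
      (ENNReal.ofReal (lam ^ k / k.factorial) * Lterm d R lam A B C k).toReal := by
    intro k
    rw [integral_term hAm hBm hBvol hlam k, ENNReal.toReal_mul,
      ENNReal.toReal_ofReal (coef_nonneg hlam k)]
  rw [tsum_congr hterm, ← ENNReal.tsum_toReal_eq
    (fun k => ENNReal.mul_ne_top ENNReal.ofReal_ne_top (Lterm_ne_top hAvol hBvol hlam k))]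
  rfl


/-- DLR-type factorisation of the partition function over a disjoint splitting of the
domain: for disjoint bounded Borel sets `A`, `B` and a finite boundary condition `C`
disjoint from `A ∪ B`,
`Z(A ∪ B, C, λ) = Σ_k (λ^k/k!) ∫_{A^k} h_k(x|C) · Z(B, C ∪ {x_1,…,x_k}, λ) dx`. -/
theorem partFun_dlr (d : ℕ) (R lam : ℝ) (hR : 0 ≤ R) (hlam : 0 ≤ lam)
    (A B : Set (EuclideanSpace ℝ (Fin d)))
    (hAm : MeasurableSet A) (hBm : MeasurableSet B)
    (hAb : Bornology.IsBounded A) (hBb : Bornology.IsBounded B)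
    (hAB : Disjoint A B)
    (C : Finset (EuclideanSpace ℝ (Fin d)))
    (hC : ∀ c ∈ C, c ∉ A ∪ B) :
    partFun d R lam (A ∪ B) C =
      ∑' k : ℕ, (lam ^ k / k.factorial) *
        ∫ x in Set.univ.pi (fun _ : Fin k => A),
          hsInd d R C x *
            partFun d R lam B (C ∪ Finset.image x Finset.univ) := by
  exact partFun_dlr' d R lam hR hlam A B hAm hBm hAb hBb hAB C hC
end

section
/- One-dimensional derivative of the partition function (one-dimensional instance of the paper's Proposition on the derivative of the log-partition function): let d = 1, R ≥ 0, λ ≥ 0, a < b reals, and C ⊆ ℝ a finite set. Define z : (a,b) → ℝ by z(x) := Z((x,b), C, λ). Then for Lebesgue-almost every x ∈ (a,b), z is differentiable at x with z'(x) = −λ · 1[∀ c ∈ C, |x − c| > R] · Z((x,b), C ∪ {x}, λ). Equivalently, wherever z'(x) exists and λ > 0, −(1/λ) (d/dx) log Z((x,b), C, λ) = 1[∀ c ∈ C, |x − c| > R] · Z((x,b), C ∪ {x}, λ) / Z((x,b), C, λ). -/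
open MeasureTheory
open scoped Classical

/-- One-dimensional hard-core indicator of a tuple `x = (x 0, …, x (n-1))` of points
of `ℝ` under boundary condition `C`: equals `1` iff `|x i - x j| > R` for all `i < j`
and `|x i - c| > R` for all `i` and all `c ∈ C`. -/
noncomputable def hsInd1 (R : ℝ) (C : Finset ℝ) {n : ℕ} (x : Fin n → ℝ) : ℝ :=
  if (∀ i j : Fin n, i < j → R < |x i - x j|) ∧ (∀ i : Fin n, ∀ c ∈ C, R < |x i - c|)
    then 1 else 0

/-- The one-dimensional hard-sphere partition function
`Z(B,C,λ) = Σ_{n≥0} (λ^n/n!) ∫_{B^n} h_n(x|C) dx`. -/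
noncomputable def partFun1 (R lam : ℝ) (B : Set ℝ) (C : Finset ℝ) : ℝ :=
  ∑' n : ℕ, (lam ^ n / n.factorial) *
    ∫ x in Set.univ.pi (fun _ : Fin n => B), hsInd1 R C x

namespace PF1
open Set Filter Topology
open scoped ENNReal

/-- admissible configurations in `(t,b)^n` -/
def SS (R t b : ℝ) (C : Finset ℝ) (n : ℕ) : Set (Fin n → ℝ) :=
  {x | (∀ i, x i ∈ Set.Ioo t b) ∧ (∀ i j, i ≠ j → R < |x i - x j|) ∧
    (∀ i, ∀ c ∈ C, R < |x i - c|)}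

lemma measurableSet_pairs (R : ℝ) (n : ℕ) :
    MeasurableSet {x : Fin n → ℝ | ∀ i j, i ≠ j → R < |x i - x j|} := by
  have h : {x : Fin n → ℝ | ∀ i j, i ≠ j → R < |x i - x j|}
      = ⋂ (i) (j), {x : Fin n → ℝ | i ≠ j → R < |x i - x j|} := by
    ext x; simp [Set.mem_iInter]
  rw [h]
  refine MeasurableSet.iInter fun i => MeasurableSet.iInter fun j => ?_
  by_cases hij : i = j
  · simp [hij]
  · have : {x : Fin n → ℝ | i ≠ j → R < |x i - x j|} = {x | R < |x i - x j|} := by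
      ext x; simp [hij]
    rw [this]
    exact measurableSet_lt measurable_const
      (((measurable_pi_apply i).sub (measurable_pi_apply j)).abs)

lemma measurableSet_vs (R : ℝ) (C : Finset ℝ) (n : ℕ) :
    MeasurableSet {x : Fin n → ℝ | ∀ i, ∀ c ∈ C, R < |x i - c|} := by
  have h : {x : Fin n → ℝ | ∀ i, ∀ c ∈ C, R < |x i - c|}
      = ⋂ (i), ⋂ c ∈ (C : Set ℝ), {x : Fin n → ℝ | R < |x i - c|} := by
    ext x; simp [Set.mem_iInter]
  rw [h]
  refine MeasurableSet.iInter fun i => MeasurableSet.biInter (C : Set ℝ).to_countable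
    fun c _ => ?_
  exact measurableSet_lt measurable_const (((measurable_pi_apply i).sub measurable_const).abs)

lemma measurableSet_SS (R t b : ℝ) (C : Finset ℝ) (n : ℕ) :
    MeasurableSet (SS R t b C n) := by
  have h : SS R t b C n = (Set.univ.pi fun _ : Fin n => Set.Ioo t b) ∩
      ({x : Fin n → ℝ | ∀ i j, i ≠ j → R < |x i - x j|} ∩
       {x : Fin n → ℝ | ∀ i, ∀ c ∈ C, R < |x i - c|}) := by
    ext x; simp [SS, Set.mem_pi, and_assoc]
  rw [h]
  exact (MeasurableSet.univ_pi fun _ => measurableSet_Ioo).inter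
    ((measurableSet_pairs R n).inter (measurableSet_vs R C n))

lemma integral_hsInd1 (R t b : ℝ) (C : Finset ℝ) (n : ℕ) :
    ∫ x in Set.univ.pi (fun _ : Fin n => Set.Ioo t b), hsInd1 R C x
      = (volume (SS R t b C n)).toReal := by
  have hind : ∀ x : Fin n → ℝ, hsInd1 R C x
      = Set.indicator {x : Fin n → ℝ | (∀ i j, i ≠ j → R < |x i - x j|) ∧
          (∀ i, ∀ c ∈ C, R < |x i - c|)} (fun _ => (1:ℝ)) x := by
    intro x
    rw [Set.indicator_apply, hsInd1]
    refine if_congr ⟨?_, ?_⟩ rfl rfl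
    · rintro ⟨h1, h2⟩
      refine ⟨fun i j hij => ?_, h2⟩
      rcases lt_or_gt_of_ne hij with h | h
      · exact h1 i j h
      · rw [abs_sub_comm]; exact h1 j i h
    · rintro ⟨h1, h2⟩
      exact ⟨fun i j hij => h1 i j hij.ne, h2⟩
  have hmeas : MeasurableSet {x : Fin n → ℝ | (∀ i j, i ≠ j → R < |x i - x j|) ∧
      (∀ i, ∀ c ∈ C, R < |x i - c|)} := by
    exact (measurableSet_pairs R n).inter (measurableSet_vs R C n)
  simp_rw [hind]
  rw [MeasureTheory.setIntegral_indicator hmeas, setIntegral_const]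
  have hset : (Set.univ.pi fun _ : Fin n => Set.Ioo t b) ∩
      {x : Fin n → ℝ | (∀ i j, i ≠ j → R < |x i - x j|) ∧
        (∀ i, ∀ c ∈ C, R < |x i - c|)} = SS R t b C n := by
    ext x; simp [SS, Set.mem_pi, and_assoc]
  rw [hset, smul_eq_mul, mul_one]; rfl

lemma volume_SS_le (R t b : ℝ) (C : Finset ℝ) (n : ℕ) :
    volume (SS R t b C n) ≤ ENNReal.ofReal (b - t) ^ n := by
  have h1 : SS R t b C n ⊆ Set.univ.pi fun _ : Fin n => Set.Ioo t b := by
    intro x hx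
    rw [Set.mem_pi]
    exact fun i _ => hx.1 i
  calc volume (SS R t b C n) ≤ volume (Set.univ.pi fun _ : Fin n => Set.Ioo t b) :=
        measure_mono h1
    _ = ∏ _i : Fin n, volume (Set.Ioo t b) := volume_pi_pi _
    _ = ENNReal.ofReal (b - t) ^ n := by
        simp [Real.volume_Ioo, Finset.prod_const, Finset.card_univ]

lemma volume_SS_lt_top (R t b : ℝ) (C : Finset ℝ) (n : ℕ) :
    volume (SS R t b C n) < ⊤ :=
  lt_of_le_of_lt (volume_SS_le R t b C n) (ENNReal.pow_lt_top ENNReal.ofReal_lt_top)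

def SMin (R t b : ℝ) (C : Finset ℝ) (m : ℕ) (i : Fin (m+1)) : Set (Fin (m+1) → ℝ) :=
  SS R t b C (m+1) ∩ {x | ∀ j, j ≠ i → x i < x j}

lemma measurableSet_SMin (R t b : ℝ) (C : Finset ℝ) (m : ℕ) (i : Fin (m+1)) :
    MeasurableSet (SMin R t b C m i) := by
  refine (measurableSet_SS R t b C (m+1)).inter ?_
  have h : {x : Fin (m+1) → ℝ | ∀ j, j ≠ i → x i < x j}
      = ⋂ j, {x : Fin (m+1) → ℝ | j ≠ i → x i < x j} := by ext x; simp
  rw [h]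
  refine MeasurableSet.iInter fun j => ?_
  by_cases hj : j = i
  · simp [hj]
  · have : {x : Fin (m+1) → ℝ | j ≠ i → x i < x j} = {x | x i < x j} := by ext x; simp [hj]
    rw [this]
    exact measurableSet_lt (measurable_pi_apply i) (measurable_pi_apply j)

lemma comp_mem_SS {R t b : ℝ} {C : Finset ℝ} {n : ℕ} (σ : Equiv.Perm (Fin n))
    {x : Fin n → ℝ} (hx : x ∈ SS R t b C n) : (x ∘ σ) ∈ SS R t b C n :=
  ⟨fun i => hx.1 (σ i), fun i j hij => hx.2.1 (σ i) (σ j) fun h => hij (σ.injective h),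
    fun i c hc => hx.2.2 (σ i) c hc⟩

lemma comp_mem_SS_iff {R t b : ℝ} {C : Finset ℝ} {n : ℕ} (σ : Equiv.Perm (Fin n))
    {x : Fin n → ℝ} : (x ∘ σ) ∈ SS R t b C n ↔ x ∈ SS R t b C n := by
  constructor
  · intro h
    have := comp_mem_SS σ.symm h
    have he : (x ∘ σ) ∘ σ.symm = x := by funext j; simp
    rwa [he] at this
  · exact comp_mem_SS σ

lemma vol_SMin_eq (R t b : ℝ) (C : Finset ℝ) (m : ℕ) (i : Fin (m+1)) :
    volume (SMin R t b C m i) = volume (SMin R t b C m 0) := by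
  set σ := Equiv.swap (0 : Fin (m+1)) i with hσ
  have hmp := MeasureTheory.volume_measurePreserving_piCongrLeft (fun _ : Fin (m+1) => ℝ) σ
  set e := MeasurableEquiv.piCongrLeft (fun _ : Fin (m+1) => ℝ) σ with he
  have happ : ∀ (g : Fin (m+1) → ℝ), e g = g ∘ σ.symm := by
    intro g; funext j
    have := MeasurableEquiv.piCongrLeft_apply_apply σ (β := fun _ => ℝ) g (σ.symm j)
    simpa using this
  have hpre : e ⁻¹' (SMin R t b C m 0) = SMin R t b C m i := by
    ext g
    have hσs : σ.symm = σ := Equiv.symm_swap _ _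
    simp only [Set.mem_preimage, happ, SMin, Set.mem_inter_iff]
    rw [hσs]
    constructor
    · rintro ⟨h1, h2⟩
      refine ⟨(comp_mem_SS_iff σ).1 h1, fun k hk => ?_⟩
      have hk' : σ.symm k ≠ 0 := by
        intro h
        apply hk
        have : k = σ 0 := by rw [← h]; simp
        rw [this, hσ, Equiv.swap_apply_left]
      have := h2 (σ.symm k) hk'
      simp only [Function.comp_apply] at this
      rwa [show σ (σ.symm k) = k from σ.apply_symm_apply k,
        show σ 0 = i from by rw [hσ]; exact Equiv.swap_apply_left _ _] at this
    · rintro ⟨h1, h2⟩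
      refine ⟨(comp_mem_SS_iff σ).2 h1, fun j hj => ?_⟩
      simp only [Function.comp_apply]
      rw [show σ 0 = i from by rw [hσ]; exact Equiv.swap_apply_left _ _]
      apply h2
      intro h
      apply hj
      have : σ j = σ 0 := by rw [h, hσ, Equiv.swap_apply_left]
      exact σ.injective this
  rw [← hpre, hmp.measure_preimage (measurableSet_SMin R t b C m 0).nullMeasurableSet]

lemma vol_SS_succ {R : ℝ} (hR : 0 ≤ R) (t b : ℝ) (C : Finset ℝ) (m : ℕ) :
    volume (SS R t b C (m+1)) = (m+1) * volume (SMin R t b C m 0) := by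
  have hunion : SS R t b C (m+1) = ⋃ i, SMin R t b C m i := by
    ext x
    simp only [Set.mem_iUnion, SMin, Set.mem_inter_iff]
    constructor
    · intro hx
      obtain ⟨i, -, hi⟩ := Finset.exists_min_image Finset.univ x ⟨0, Finset.mem_univ 0⟩
      refine ⟨i, hx, fun j hj => ?_⟩
      have hle := hi j (Finset.mem_univ j)
      have hne : x i ≠ x j := by
        intro h
        have := hx.2.1 i j (fun hh => hj (hh.symm ▸ rfl))
        rw [h] at this
        simp at this
        exact absurd (lt_of_le_of_lt hR this) (lt_irrefl 0)
      exact lt_of_le_of_ne hle hne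
    · rintro ⟨i, hx, -⟩; exact hx
  have hdisj : Pairwise (Function.onFun Disjoint fun i => SMin R t b C m i) := by
    intro i j hij
    refine Set.disjoint_left.mpr fun x hxi hxj => ?_
    exact absurd (hxj.2 i hij) (not_lt.mpr (le_of_lt (hxi.2 j hij.symm)))
  rw [hunion, measure_iUnion hdisj (measurableSet_SMin R t b C m),
    tsum_fintype]
  simp [vol_SMin_eq, Finset.card_univ, nsmul_eq_mul]

/-- the sliced set in the product space -/
def WW (R t b : ℝ) (C : Finset ℝ) (m : ℕ) : Set (ℝ × (Fin m → ℝ)) :=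
  {p | p.1 ∈ Set.Ioo t b ∧ (∀ c ∈ C, R < |p.1 - c|) ∧ p.2 ∈ SS R p.1 b (insert p.1 C) m}

lemma measurableSet_WW (R t b : ℝ) (C : Finset ℝ) (m : ℕ) :
    MeasurableSet (WW R t b C m) := by
  have hrw : WW R t b C m =
      (Prod.fst ⁻¹' Set.Ioo t b) ∩
      ((⋂ c ∈ (C : Set ℝ), {p : ℝ × (Fin m → ℝ) | R < |p.1 - c|}) ∩
       ((⋂ j, ({p : ℝ × (Fin m → ℝ) | p.1 < p.2 j} ∩ {p | p.2 j < b})) ∩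
        ((⋂ (j) (k), {p : ℝ × (Fin m → ℝ) | j ≠ k → R < |p.2 j - p.2 k|}) ∩
         ((⋂ j, {p : ℝ × (Fin m → ℝ) | R < |p.2 j - p.1|}) ∩
          (⋂ (j) (c ∈ (C : Set ℝ)), {p : ℝ × (Fin m → ℝ) | R < |p.2 j - c|}))))) := by
    ext p
    simp only [WW, SS, Set.mem_inter_iff, Set.mem_preimage, Set.mem_iInter, Set.mem_setOf_eq,
      Set.mem_Ioo, Finset.forall_mem_insert, Finset.mem_coe]
    constructor
    · rintro ⟨h1, h2, h3, h4, h5⟩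
      exact ⟨h1, fun c hc => h2 c hc, fun j => ⟨(h3 j).1, (h3 j).2⟩, fun j k hjk => h4 j k hjk,
        fun j => (h5 j).1, fun j c hc => (h5 j).2 c hc⟩
    · rintro ⟨h1, h2, h3, h4, h5, h6⟩
      exact ⟨h1, fun c hc => h2 c hc, fun j => ⟨(h3 j).1, (h3 j).2⟩, fun j k hjk => h4 j k hjk,
        fun j => ⟨h5 j, fun c hc => h6 j c hc⟩⟩
  rw [hrw]
  have hsnd : ∀ j : Fin m, Measurable fun p : ℝ × (Fin m → ℝ) => p.2 j :=
    fun j => (measurable_pi_apply j).comp measurable_snd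
  refine (measurable_fst measurableSet_Ioo).inter ?_
  refine MeasurableSet.inter ?_ ?_
  · exact MeasurableSet.biInter (C : Set ℝ).to_countable fun c _ =>
      measurableSet_lt measurable_const ((measurable_fst.sub measurable_const).abs)
  refine MeasurableSet.inter ?_ ?_
  · exact MeasurableSet.iInter fun j =>
      (measurableSet_lt measurable_fst (hsnd j)).inter
        (measurableSet_lt (hsnd j) measurable_const)
  refine MeasurableSet.inter ?_ ?_
  · refine MeasurableSet.iInter fun j => MeasurableSet.iInter fun k => ?_
    by_cases hjk : j = k
    · simp [hjk]
    · have : {p : ℝ × (Fin m → ℝ) | j ≠ k → R < |p.2 j - p.2 k|}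
          = {p | R < |p.2 j - p.2 k|} := by ext p; simp [hjk]
      rw [this]
      exact measurableSet_lt measurable_const (((hsnd j).sub (hsnd k)).abs)
  refine MeasurableSet.inter ?_ ?_
  · exact MeasurableSet.iInter fun j =>
      measurableSet_lt measurable_const (((hsnd j).sub measurable_fst).abs)
  · exact MeasurableSet.iInter fun j => MeasurableSet.biInter (C : Set ℝ).to_countable
      fun c _ => measurableSet_lt measurable_const (((hsnd j).sub measurable_const).abs)

lemma preimage_WW (R t b : ℝ) (C : Finset ℝ) (m : ℕ) :
    (MeasurableEquiv.piFinSuccAbove (fun _ : Fin (m+1) => ℝ) 0) ⁻¹' (WW R t b C m)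
      = SMin R t b C m 0 := by
  ext x
  have he : (MeasurableEquiv.piFinSuccAbove (fun _ : Fin (m+1) => ℝ) 0) x
      = (x 0, fun j => x j.succ) := by
    simp only [MeasurableEquiv.piFinSuccAbove_apply, Fin.insertNthEquiv]
    rfl
  simp only [Set.mem_preimage, he, WW, Set.mem_setOf_eq, SMin, SS, Set.mem_inter_iff,
    Set.mem_Ioo, Finset.forall_mem_insert]
  constructor
  · rintro ⟨h1, h2, h3, h4, h5⟩
    refine ⟨⟨fun i => ?_, fun i j hij => ?_, fun i c hc => ?_⟩, fun j hj => ?_⟩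
    · rcases Fin.eq_zero_or_eq_succ i with rfl | ⟨k, rfl⟩
      · exact h1
      · exact ⟨lt_trans h1.1 (h3 k).1, (h3 k).2⟩
    · rcases Fin.eq_zero_or_eq_succ i with rfl | ⟨k, rfl⟩ <;>
        rcases Fin.eq_zero_or_eq_succ j with rfl | ⟨l, rfl⟩
      · exact absurd rfl hij
      · rw [abs_sub_comm]; exact (h5 l).1
      · exact (h5 k).1
      · exact h4 k l fun h => hij (by rw [h])
    · rcases Fin.eq_zero_or_eq_succ i with rfl | ⟨k, rfl⟩
      · exact h2 c hc
      · exact (h5 k).2 c hc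
    · rcases Fin.eq_zero_or_eq_succ j with rfl | ⟨k, rfl⟩
      · exact absurd rfl hj
      · exact (h3 k).1
  · rintro ⟨⟨h1, h2, h3⟩, h4⟩
    refine ⟨h1 0, fun c hc => h3 0 c hc, fun j => ⟨h4 j.succ (Fin.succ_ne_zero j), (h1 j.succ).2⟩,
      fun j k hjk => h2 j.succ k.succ fun h => hjk (Fin.succ_injective _ h),
      fun j => ⟨h2 j.succ 0 (Fin.succ_ne_zero j), fun c hc => h3 j.succ c hc⟩⟩

lemma vol_SMin0 (R t b : ℝ) (C : Finset ℝ) (m : ℕ) :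
    volume (SMin R t b C m 0) = ∫⁻ s in Set.Ioo t b,
      (if ∀ c ∈ C, R < |s - c| then 1 else 0) * volume (SS R s b (insert s C) m) := by
  have hmp := MeasureTheory.volume_preserving_piFinSuccAbove (fun _ : Fin (m+1) => ℝ) 0
  rw [← preimage_WW R t b C m,
    hmp.measure_preimage (measurableSet_WW R t b C m).nullMeasurableSet]
  rw [MeasureTheory.Measure.volume_eq_prod _ _, Measure.prod_apply (measurableSet_WW R t b C m)]
  have hslice : ∀ s : ℝ, volume (Prod.mk s ⁻¹' WW R t b C m)
      = Set.indicator (Set.Ioo t b)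
          (fun s => (if ∀ c ∈ C, R < |s - c| then 1 else 0)
            * volume (SS R s b (insert s C) m)) s := by
    intro s
    by_cases hs1 : s ∈ Set.Ioo t b
    · by_cases hs2 : ∀ c ∈ C, R < |s - c|
      · have : Prod.mk s ⁻¹' WW R t b C m = SS R s b (insert s C) m := by
          ext y
          simp only [Set.mem_preimage, WW, Set.mem_setOf_eq]
          exact ⟨fun h => h.2.2, fun h => ⟨hs1, hs2, h⟩⟩
        rw [this, Set.indicator_of_mem hs1, if_pos hs2, one_mul]
      · have : Prod.mk s ⁻¹' WW R t b C m = ∅ := by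
          ext y
          simp only [Set.mem_preimage, WW, Set.mem_setOf_eq, Set.mem_empty_iff_false, iff_false]
          rintro ⟨-, h, -⟩; exact hs2 h
        rw [this, Set.indicator_of_mem hs1, if_neg hs2, zero_mul, measure_empty]
    · have : Prod.mk s ⁻¹' WW R t b C m = ∅ := by
        ext y
        simp only [Set.mem_preimage, WW, Set.mem_setOf_eq, Set.mem_empty_iff_false, iff_false]
        rintro ⟨h, -⟩; exact hs1 h
      rw [this, Set.indicator_of_notMem hs1, measure_empty]
  simp_rw [hslice]
  rw [lintegral_indicator measurableSet_Ioo]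

/-- slice set without the (t,b) and C restrictions on the first coordinate -/
def WW' (R b : ℝ) (C : Finset ℝ) (m : ℕ) : Set (ℝ × (Fin m → ℝ)) :=
  {p | p.2 ∈ SS R p.1 b (insert p.1 C) m}

lemma measurableSet_WW' (R b : ℝ) (C : Finset ℝ) (m : ℕ) :
    MeasurableSet (WW' R b C m) := by
  have hsnd : ∀ j : Fin m, Measurable fun p : ℝ × (Fin m → ℝ) => p.2 j :=
    fun j => (measurable_pi_apply j).comp measurable_snd
  have hrw : WW' R b C m =
      (⋂ j, ({p : ℝ × (Fin m → ℝ) | p.1 < p.2 j} ∩ {p | p.2 j < b})) ∩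
        ((⋂ (j) (k), {p : ℝ × (Fin m → ℝ) | j ≠ k → R < |p.2 j - p.2 k|}) ∩
         ((⋂ j, {p : ℝ × (Fin m → ℝ) | R < |p.2 j - p.1|}) ∩
          (⋂ (j) (c ∈ (C : Set ℝ)), {p : ℝ × (Fin m → ℝ) | R < |p.2 j - c|}))) := by
    ext p
    simp only [WW', SS, Set.mem_inter_iff, Set.mem_iInter, Set.mem_setOf_eq,
      Set.mem_Ioo, Finset.forall_mem_insert, Finset.mem_coe]
    constructor
    · rintro ⟨h3, h4, h5⟩
      exact ⟨fun j => ⟨(h3 j).1, (h3 j).2⟩, fun j k hjk => h4 j k hjk,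
        fun j => (h5 j).1, fun j c hc => (h5 j).2 c hc⟩
    · rintro ⟨h3, h4, h5, h6⟩
      exact ⟨fun j => ⟨(h3 j).1, (h3 j).2⟩, fun j k hjk => h4 j k hjk,
        fun j => ⟨h5 j, fun c hc => h6 j c hc⟩⟩
  rw [hrw]
  refine MeasurableSet.inter ?_ ?_
  · exact MeasurableSet.iInter fun j =>
      (measurableSet_lt measurable_fst (hsnd j)).inter
        (measurableSet_lt (hsnd j) measurable_const)
  refine MeasurableSet.inter ?_ ?_
  · refine MeasurableSet.iInter fun j => MeasurableSet.iInter fun k => ?_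
    by_cases hjk : j = k
    · simp [hjk]
    · have : {p : ℝ × (Fin m → ℝ) | j ≠ k → R < |p.2 j - p.2 k|}
          = {p | R < |p.2 j - p.2 k|} := by ext p; simp [hjk]
      rw [this]
      exact measurableSet_lt measurable_const (((hsnd j).sub (hsnd k)).abs)
  refine MeasurableSet.inter ?_ ?_
  · exact MeasurableSet.iInter fun j =>
      measurableSet_lt measurable_const (((hsnd j).sub measurable_fst).abs)
  · exact MeasurableSet.iInter fun j => MeasurableSet.biInter (C : Set ℝ).to_countable
      fun c _ => measurableSet_lt measurable_const (((hsnd j).sub measurable_const).abs)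

lemma measurable_Vol (R b : ℝ) (C : Finset ℝ) (m : ℕ) :
    Measurable fun s => volume (SS R s b (insert s C) m) := by
  have h : (fun s => volume (SS R s b (insert s C) m))
      = fun s => volume (Prod.mk s ⁻¹' WW' R b C m) := by
    funext s; rfl
  rw [h]
  exact measurable_measure_prodMk_left (measurableSet_WW' R b C m)

/-- `G m s = Z`-type integral: volume of admissible configs in `(s,b)^m` w.r.t. `insert s C` -/
noncomputable def G (R b : ℝ) (C : Finset ℝ) (m : ℕ) (s : ℝ) : ℝ :=
  (volume (SS R s b (insert s C) m)).toReal

noncomputable def qf (R b : ℝ) (C : Finset ℝ) (m : ℕ) (s : ℝ) : ℝ :=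
  (if ∀ c ∈ C, R < |s - c| then 1 else 0) * G R b C m s

lemma measurableSet_good (R : ℝ) (C : Finset ℝ) :
    MeasurableSet {s : ℝ | ∀ c ∈ C, R < |s - c|} := by
  have h : {s : ℝ | ∀ c ∈ C, R < |s - c|} = ⋂ c ∈ (C : Set ℝ), {s : ℝ | R < |s - c|} := by
    ext s; simp
  rw [h]
  exact MeasurableSet.biInter (C : Set ℝ).to_countable fun c _ =>
    measurableSet_lt measurable_const ((measurable_id.sub measurable_const).abs)

lemma measurable_G (R b : ℝ) (C : Finset ℝ) (m : ℕ) : Measurable (G R b C m) :=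
  (measurable_Vol R b C m).ennreal_toReal

lemma measurable_qf (R b : ℝ) (C : Finset ℝ) (m : ℕ) : Measurable (qf R b C m) := by
  have h1 : (fun s => if ∀ c ∈ C, R < |s - c| then (1:ℝ) else 0)
      = Set.indicator {s : ℝ | ∀ c ∈ C, R < |s - c|} (fun _ => (1:ℝ)) := by
    funext s; simp [Set.indicator_apply]
  refine Measurable.mul ?_ (measurable_G R b C m)
  rw [h1]
  exact measurable_const.indicator (measurableSet_good R C)

lemma G_nonneg (R b : ℝ) (C : Finset ℝ) (m : ℕ) (s : ℝ) : 0 ≤ G R b C m s :=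
  ENNReal.toReal_nonneg

lemma qf_nonneg (R b : ℝ) (C : Finset ℝ) (m : ℕ) (s : ℝ) : 0 ≤ qf R b C m s := by
  exact mul_nonneg (by split_ifs <;> norm_num) (G_nonneg R b C m s)

lemma SS_eq_empty {R s b : ℝ} (hbs : b ≤ s) (C : Finset ℝ) (k : ℕ) :
    SS R s b C (k+1) = ∅ := by
  ext x
  simp only [Set.mem_empty_iff_false, iff_false]
  intro hx
  exact absurd (lt_trans (hx.1 0).1 (hx.1 0).2) (not_lt.mpr hbs)

lemma SS_zero_eq_univ (R s b : ℝ) (C : Finset ℝ) : SS R s b C 0 = Set.univ := by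
  ext x
  simp only [Set.mem_univ, iff_true, SS, Set.mem_setOf_eq]
  exact ⟨fun i => i.elim0, fun i => i.elim0, fun i => i.elim0⟩

lemma volume_univ_fin_zero : volume (Set.univ : Set (Fin 0 → ℝ)) = 1 := by
  rw [← Set.pi_univ Set.univ]
  rw [volume_pi_pi]
  simp

lemma G_le {a b : ℝ} (hab : a < b) (R : ℝ) (C : Finset ℝ) (m : ℕ) {s : ℝ} (has : a < s) :
    G R b C m s ≤ (b - a) ^ m := by
  cases m with
  | zero => simp [G, SS_zero_eq_univ, volume_univ_fin_zero]
  | succ k =>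
    rcases lt_or_ge s b with hsb | hbs
    · have h1 : G R b C (k+1) s ≤ (b - s) ^ (k+1) := by
        have := ENNReal.toReal_mono (a := volume (SS R s b (insert s C) (k+1)))
          (by simp [ENNReal.pow_ne_top]) (volume_SS_le R s b (insert s C) (k+1))
        rwa [ENNReal.toReal_pow, ENNReal.toReal_ofReal (le_of_lt (sub_pos.mpr hsb))] at this
      exact le_trans h1 (pow_le_pow_left₀ (le_of_lt (sub_pos.mpr hsb))
        (by linarith) _)
    · have : G R b C (k+1) s = 0 := by
        simp [G, SS_eq_empty hbs]
      rw [this]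
      exact pow_nonneg (by linarith) _

lemma qf_le {a b : ℝ} (hab : a < b) (R : ℝ) (C : Finset ℝ) (m : ℕ) {s : ℝ} (has : a < s) :
    |qf R b C m s| ≤ (b - a) ^ m := by
  rw [abs_of_nonneg (qf_nonneg R b C m s)]
  unfold qf
  split_ifs
  · rw [one_mul]; exact G_le hab R C m has
  · rw [zero_mul]; exact pow_nonneg (by linarith) _

/-- the key identity in real form -/
lemma integral_hsInd1_succ {R : ℝ} (hR : 0 ≤ R) (t b : ℝ) (C : Finset ℝ) (m : ℕ) :
    ∫ x in Set.univ.pi (fun _ : Fin (m+1) => Set.Ioo t b), hsInd1 R C x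
      = ((m:ℝ)+1) * ∫ s in Set.Ioo t b, qf R b C m s := by
  rw [integral_hsInd1, vol_SS_succ hR, vol_SMin0]
  have hmeas : Measurable fun s => (if ∀ c ∈ C, R < |s - c| then (1:ℝ≥0∞) else 0)
      * volume (SS R s b (insert s C) m) := by
    have h1 : (fun s => if ∀ c ∈ C, R < |s - c| then (1:ℝ≥0∞) else 0)
        = Set.indicator {s : ℝ | ∀ c ∈ C, R < |s - c|} (fun _ => (1:ℝ≥0∞)) := by
      funext s; simp [Set.indicator_apply]
    refine Measurable.mul ?_ (measurable_Vol R b C m)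
    rw [h1]
    exact measurable_const.indicator (measurableSet_good R C)
  have hfin : ∀ᵐ s ∂(volume.restrict (Set.Ioo t b)),
      (if ∀ c ∈ C, R < |s - c| then (1:ℝ≥0∞) else 0)
        * volume (SS R s b (insert s C) m) < ⊤ := by
    refine Filter.Eventually.of_forall fun s => ?_
    refine ENNReal.mul_lt_top ?_ (volume_SS_lt_top R s b (insert s C) m)
    split_ifs <;> simp
  have := integral_toReal hmeas.aemeasurable hfin
  rw [ENNReal.toReal_mul, ← this]
  have hpt : ∀ s : ℝ, ((if ∀ c ∈ C, R < |s - c| then (1:ℝ≥0∞) else 0)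
      * volume (SS R s b (insert s C) m)).toReal = qf R b C m s := by
    intro s
    rw [ENNReal.toReal_mul, qf, G]
    congr 1
    split_ifs <;> simp
  simp_rw [hpt]
  congr 1

lemma integral_hsInd1_zero (R t b : ℝ) (C : Finset ℝ) :
    ∫ x in Set.univ.pi (fun _ : Fin 0 => Set.Ioo t b), hsInd1 R C x = 1 := by
  rw [integral_hsInd1, SS_zero_eq_univ, volume_univ_fin_zero]
  simp

lemma eventually_lt_iff {u v : ℝ} (h : u ≠ v) :
    ∀ᶠ s in 𝓝 u, ((s < v) ↔ (u < v)) := by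
  rcases h.lt_or_gt with hlt | hgt
  · filter_upwards [Iio_mem_nhds hlt] with s hs
    exact iff_of_true hs hlt
  · filter_upwards [Ioi_mem_nhds hgt] with s hs
    exact iff_of_false (not_lt.mpr (le_of_lt hs)) (not_lt.mpr (le_of_lt hgt))

lemma eventually_abs_iff {u c R : ℝ} (h : |u - c| ≠ R) :
    ∀ᶠ s in 𝓝 u, ((R < |s - c|) ↔ (R < |u - c|)) := by
  have hco : Filter.Tendsto (fun s : ℝ => |s - c|) (𝓝 u) (𝓝 |u - c|) :=
    ((continuous_id.sub continuous_const).abs).continuousAt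
  rcases lt_or_gt_of_ne h with hlt | hgt
  · filter_upwards [hco.eventually_lt_const hlt] with s hs
    exact iff_of_false (not_lt.mpr (le_of_lt hs)) (not_lt.mpr (le_of_lt hlt))
  · filter_upwards [hco.eventually_const_lt hgt] with s hs
    exact iff_of_true hs hgt

lemma eventually_abs_iff' {u c R : ℝ} (h : |u - c| ≠ R) :
    ∀ᶠ s in 𝓝 u, ((R < |c - s|) ↔ (R < |c - u|)) := by
  filter_upwards [eventually_abs_iff h] with s hs
  rw [abs_sub_comm c s, abs_sub_comm c u]
  exact hs

lemma continuousAt_G (R b : ℝ) (C : Finset ℝ) (m : ℕ) (s₀ : ℝ) :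
    ContinuousAt (G R b C m) s₀ := by
  set ind : ℝ → (Fin m → ℝ) → ℝ :=
    fun s => Set.indicator (SS R s b (insert s C) m) (fun _ => (1:ℝ)) with hind
  have hrep : ∀ s, G R b C m s = ∫ y, ind s y := by
    intro s
    rw [hind]
    rw [integral_indicator (measurableSet_SS R s b (insert s C) m), setIntegral_const,
      smul_eq_mul, mul_one, G]; rfl
  have key : Filter.Tendsto (fun s => ∫ y, ind s y) (𝓝 s₀) (𝓝 (∫ y, ind s₀ y)) := by
    apply tendsto_integral_filter_of_dominated_convergence
      (bound := Set.indicator (Set.univ.pi fun _ : Fin m => Set.Ioo (s₀-1) b) fun _ => (1:ℝ))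
    · exact Filter.Eventually.of_forall fun s =>
        (measurable_const.indicator (measurableSet_SS R s b (insert s C) m)).aestronglyMeasurable
    · filter_upwards [Ioo_mem_nhds (by linarith : s₀ - 1 < s₀) (lt_add_one s₀)] with s hs
      refine Filter.Eventually.of_forall fun y => ?_
      by_cases hy : y ∈ SS R s b (insert s C) m
      · have hy' : y ∈ Set.univ.pi fun _ : Fin m => Set.Ioo (s₀-1) b := by
          rw [Set.mem_pi]
          intro i _
          exact ⟨lt_trans hs.1 (hy.1 i).1, (hy.1 i).2⟩
        rw [hind]
        simp only [Set.indicator_of_mem hy, Set.indicator_of_mem hy']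
        simp
      · rw [hind]
        simp only [Set.indicator_of_notMem hy]
        simp only [norm_zero]
        exact Set.indicator_nonneg (fun _ _ => zero_le_one) _
    · rw [integrable_indicator_iff (MeasurableSet.univ_pi fun _ => measurableSet_Ioo)]
      refine integrableOn_const ?_
      rw [volume_pi_pi]
      simp only [Real.volume_Ioo, Finset.prod_const, Finset.card_univ, Fintype.card_fin]
      exact (ENNReal.pow_lt_top ENNReal.ofReal_lt_top).ne
    · -- a.e. pointwise convergence
      set N : Set (Fin m → ℝ) := ⋃ i : Fin m,
        ({y | y i = s₀} ∪ ({y | y i = s₀ - R} ∪ {y | y i = s₀ + R})) with hN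
      have hNnull : volume N = 0 := by
        rw [hN]
        refine measure_iUnion_null fun i => ?_
        have hp : ∀ c : ℝ, volume {y : Fin m → ℝ | y i = c} = 0 := by
          intro c
          rw [MeasureTheory.volume_pi]
          exact Measure.pi_hyperplane (fun _ : Fin m => (volume : Measure ℝ)) i c
        exact measure_union_null (hp s₀) (measure_union_null (hp (s₀ - R)) (hp (s₀ + R)))
      have hae : ∀ᵐ y : Fin m → ℝ, y ∉ N := (measure_eq_zero_iff_ae_notMem.mp hNnull)
      filter_upwards [hae] with y hy
      have hyi : ∀ i : Fin m, y i ≠ s₀ ∧ y i ≠ s₀ - R ∧ y i ≠ s₀ + R := by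
        intro i
        by_contra hcon
        apply hy
        rw [hN]
        simp only [Set.mem_iUnion, Set.mem_union, Set.mem_setOf_eq]
        push_neg at hcon
        rcases Classical.em (y i = s₀) with h | h
        · exact ⟨i, Or.inl h⟩
        rcases Classical.em (y i = s₀ - R) with h2 | h2
        · exact ⟨i, Or.inr (Or.inl h2)⟩
        · exact ⟨i, Or.inr (Or.inr (by tauto))⟩
      have hev : ∀ᶠ s in 𝓝 s₀,
          ((y ∈ SS R s b (insert s C) m) ↔ (y ∈ SS R s₀ b (insert s₀ C) m)) := by
        have h1 : ∀ i : Fin m, ∀ᶠ s in 𝓝 s₀,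
            (((s < y i) ↔ (s₀ < y i)) ∧ ((R < |y i - s|) ↔ (R < |y i - s₀|))) := by
          intro i
          have hne : (y i : ℝ) ≠ s₀ := (hyi i).1
          have hner : |s₀ - y i| ≠ R := by
            intro h
            have h0 : (0:ℝ) ≤ R := h ▸ abs_nonneg _
            rcases (abs_eq h0).mp h with h1 | h1
            · exact (hyi i).2.1 (by linarith)
            · exact (hyi i).2.2 (by linarith)
          exact (eventually_lt_iff hne.symm).and (eventually_abs_iff' hner)
        filter_upwards [eventually_all.2 h1] with s hs
        simp only [SS, Set.mem_setOf_eq, Set.mem_Ioo, Finset.forall_mem_insert]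
        constructor
        · rintro ⟨ha, hb, hc⟩
          exact ⟨fun i => ⟨(hs i).1.mp (ha i).1, (ha i).2⟩, hb,
            fun i => ⟨(hs i).2.mp (hc i).1, (hc i).2⟩⟩
        · rintro ⟨ha, hb, hc⟩
          exact ⟨fun i => ⟨(hs i).1.mpr (ha i).1, (ha i).2⟩, hb,
            fun i => ⟨(hs i).2.mpr (hc i).1, (hc i).2⟩⟩
      have hcongr : (fun s => ind s y) =ᶠ[𝓝 s₀] fun _ => ind s₀ y := by
        filter_upwards [hev] with s hs
        simp only [hind]
        by_cases h : y ∈ SS R s₀ b (insert s₀ C) m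
        · rw [Set.indicator_of_mem (hs.mpr h), Set.indicator_of_mem h]
        · rw [Set.indicator_of_notMem (fun hc => h (hs.mp hc)), Set.indicator_of_notMem h]
      exact Filter.Tendsto.congr' hcongr.symm tendsto_const_nhds
  have : Filter.Tendsto (G R b C m) (𝓝 s₀) (𝓝 (∫ y, ind s₀ y)) :=
    key.congr fun s => (hrep s).symm
  have h2 : (∫ y, ind s₀ y) = G R b C m s₀ := (hrep s₀).symm
  show Filter.Tendsto (G R b C m) (𝓝 s₀) (𝓝 (G R b C m s₀))
  exact h2 ▸ this

noncomputable def Qf (R lam b : ℝ) (C : Finset ℝ) (s : ℝ) : ℝ :=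
  ∑' m : ℕ, lam ^ (m+1) / m.factorial * qf R b C m s

lemma qf_le' (R b : ℝ) (C : Finset ℝ) (m : ℕ) (s : ℝ) :
    qf R b C m s ≤ max (b - s) 1 ^ m := by
  have h1 : G R b C m s ≤ max (b - s) 0 ^ m := by
    have := ENNReal.toReal_mono (a := volume (SS R s b (insert s C) m))
      (by simp [ENNReal.pow_ne_top]) (volume_SS_le R s b (insert s C) m)
    rwa [ENNReal.toReal_pow, ENNReal.toReal_ofReal'] at this
  have h2 : max (b - s) 0 ^ m ≤ max (b - s) 1 ^ m :=
    pow_le_pow_left₀ (le_max_right _ _) (max_le_max le_rfl zero_le_one) m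
  calc qf R b C m s ≤ G R b C m s := by
        unfold qf; split_ifs <;> simp [G_nonneg R b C m s]
    _ ≤ _ := le_trans h1 h2

lemma summable_term {lam : ℝ} (hlam : 0 ≤ lam) (R b : ℝ) (C : Finset ℝ) (s : ℝ) :
    Summable fun m : ℕ => lam ^ (m+1) / m.factorial * qf R b C m s := by
  set K := max (b - s) 1 with hK
  refine Summable.of_nonneg_of_le
    (fun m => mul_nonneg (by positivity) (qf_nonneg R b C m s))
    (fun m => ?_) (((Real.summable_pow_div_factorial (lam * K)).mul_left lam))
  have : lam ^ (m+1) / m.factorial * qf R b C m s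
      ≤ lam ^ (m+1) / m.factorial * K ^ m :=
    mul_le_mul_of_nonneg_left (qf_le' R b C m s) (by positivity)
  refine le_trans this (le_of_eq ?_)
  rw [mul_pow, pow_succ]
  ring

lemma summable_pow_bound {lam : ℝ} (hlam : 0 ≤ lam) (K : ℝ) :
    Summable fun m : ℕ => lam ^ (m+1) / m.factorial * K ^ m := by
  have h := (Real.summable_pow_div_factorial (lam * K)).mul_left lam
  refine h.congr fun m => ?_
  rw [mul_pow, pow_succ]
  ring

lemma Qf_nonneg {lam : ℝ} (hlam : 0 ≤ lam) (R b : ℝ) (C : Finset ℝ) (s : ℝ) :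
    0 ≤ Qf R lam b C s :=
  tsum_nonneg fun m => mul_nonneg (by positivity) (qf_nonneg R b C m s)

lemma Qf_le {a b lam : ℝ} (hab : a < b) (hlam : 0 ≤ lam) (R : ℝ) (C : Finset ℝ)
    {s : ℝ} (has : a < s) :
    |Qf R lam b C s| ≤ ∑' m : ℕ, lam ^ (m+1) / m.factorial * (b - a) ^ m := by
  rw [abs_of_nonneg (Qf_nonneg hlam R b C s)]
  refine (summable_term hlam R b C s).tsum_le_tsum (fun m => ?_)
    (summable_pow_bound hlam (b - a))
  refine mul_le_mul_of_nonneg_left ?_ (by positivity)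
  calc qf R b C m s ≤ |qf R b C m s| := le_abs_self _
    _ ≤ (b - a) ^ m := qf_le hab R C m has

lemma measurable_Qf (R lam b : ℝ) (C : Finset ℝ) (hlam : 0 ≤ lam) :
    Measurable (Qf R lam b C) := by
  have hmeas : ∀ N : ℕ, Measurable fun s =>
      ∑ m ∈ Finset.range N, lam ^ (m+1) / m.factorial * qf R b C m s :=
    fun N => Finset.measurable_sum _ fun m _ => (measurable_qf R b C m).const_mul _
  apply measurable_of_tendsto_metrizable (f := fun N s =>
    ∑ m ∈ Finset.range N, lam ^ (m+1) / m.factorial * qf R b C m s) hmeas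
  rw [tendsto_pi_nhds]
  intro s
  exact (summable_term hlam R b C s).hasSum.tendsto_sum_nat

/-- the z-representation lemma -/
lemma partFun1_rep {R lam a b : ℝ} (hR : 0 ≤ R) (hlam : 0 ≤ lam) (hab : a < b)
    (C : Finset ℝ) {t : ℝ} (hat : a < t) (htb : t < b) :
    partFun1 R lam (Set.Ioo t b) C = 1 + ∫ s in Set.Ioo t b, Qf R lam b C s := by
  have hsummand : ∀ n : ℕ, (lam ^ n / n.factorial)
      * ∫ x in Set.univ.pi (fun _ : Fin n => Set.Ioo t b), hsInd1 R C x
      = if n = 0 then 1 else lam ^ n / (n-1).factorial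
          * ∫ s in Set.Ioo t b, qf R b C (n-1) s := by
    intro n
    cases n with
    | zero => simp [integral_hsInd1_zero R t b C]
    | succ m =>
      rw [if_neg (Nat.succ_ne_zero m), integral_hsInd1_succ hR t b C m]
      have hfac : ((m.factorial : ℝ)) ≠ 0 := Nat.cast_ne_zero.mpr m.factorial_ne_zero
      have hm1 : ((m:ℝ)+1) ≠ 0 := by positivity
      simp only [Nat.add_sub_cancel, Nat.factorial_succ]
      push_cast
      field_simp
  have hsum : Summable fun n : ℕ => (lam ^ n / n.factorial)
      * ∫ x in Set.univ.pi (fun _ : Fin n => Set.Ioo t b), hsInd1 R C x := by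
    refine Summable.of_nonneg_of_le (fun n => ?_) (fun n => ?_)
      (Real.summable_pow_div_factorial (lam * (b - t)))
    · rw [integral_hsInd1]
      positivity
    · rw [integral_hsInd1]
      have h1 : (volume (SS R t b C n)).toReal ≤ (b - t) ^ n := by
        have := ENNReal.toReal_mono (a := volume (SS R t b C n))
          (by simp [ENNReal.pow_ne_top]) (volume_SS_le R t b C n)
        rwa [ENNReal.toReal_pow, ENNReal.toReal_ofReal (by linarith)] at this
      calc lam ^ n / n.factorial * (volume (SS R t b C n)).toReal
          ≤ lam ^ n / n.factorial * (b - t) ^ n :=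
            mul_le_mul_of_nonneg_left h1 (by positivity)
        _ = (lam * (b - t)) ^ n / n.factorial := by rw [mul_pow]; ring
  rw [partFun1, hsum.tsum_eq_zero_add]
  simp only [hsummand, if_pos rfl, if_neg (Nat.succ_ne_zero _), Nat.add_sub_cancel]
  congr 1
  -- ∑' m, lam^(m+1)/m! * ∫ qf m = ∫ Qf
  have hint : ∀ m : ℕ, ∫ s in Set.Ioo t b, lam ^ (m+1) / m.factorial * qf R b C m s
      = lam ^ (m+1) / m.factorial * ∫ s in Set.Ioo t b, qf R b C m s :=
    fun m => integral_const_mul _ _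
  unfold Qf
  rw [MeasureTheory.integral_tsum]
  · exact tsum_congr fun m => (hint m).symm
  · exact fun m => ((measurable_qf R b C m).const_mul _).aestronglyMeasurable
  · -- lintegral bound
    have hbd : ∀ m : ℕ, ∫⁻ s in Set.Ioo t b, ‖lam ^ (m+1) / m.factorial * qf R b C m s‖ₑ
        ≤ ENNReal.ofReal (lam ^ (m+1) / m.factorial * (b - a) ^ m * (b - t)) := by
      intro m
      have hb2 : ∀ᵐ s ∂(volume.restrict (Set.Ioo t b)),
          (‖lam ^ (m+1) / m.factorial * qf R b C m s‖ₑ : ℝ≥0∞)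
            ≤ ENNReal.ofReal (lam ^ (m+1) / m.factorial * (b - a) ^ m) := by
        filter_upwards [ae_restrict_mem measurableSet_Ioo] with s hs
        rw [← ofReal_norm]
        refine ENNReal.ofReal_le_ofReal ?_
        rw [norm_mul]
        calc ‖lam ^ (m+1) / m.factorial‖ * ‖qf R b C m s‖
            ≤ ‖lam ^ (m+1) / m.factorial‖ * (b - a) ^ m := by
              refine mul_le_mul_of_nonneg_left ?_ (norm_nonneg _)
              exact qf_le hab R C m (lt_trans hat hs.1)
          _ = lam ^ (m+1) / m.factorial * (b - a) ^ m := by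
              congr 1
              rw [Real.norm_eq_abs, abs_of_nonneg (by positivity)]
      calc ∫⁻ s in Set.Ioo t b, ‖lam ^ (m+1) / m.factorial * qf R b C m s‖ₑ
          ≤ ∫⁻ _ in Set.Ioo t b, ENNReal.ofReal (lam ^ (m+1) / m.factorial * (b - a) ^ m) :=
            lintegral_mono_ae hb2
        _ = ENNReal.ofReal (lam ^ (m+1) / m.factorial * (b - a) ^ m) * volume (Set.Ioo t b) :=
            setLIntegral_const _ _
        _ ≤ ENNReal.ofReal (lam ^ (m+1) / m.factorial * (b - a) ^ m * (b - t)) := by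
            rw [Real.volume_Ioo, ← ENNReal.ofReal_mul
              (mul_nonneg (by positivity) (pow_nonneg (by linarith) m))]
    refine ne_of_lt (lt_of_le_of_lt (ENNReal.tsum_le_tsum hbd) ?_)
    have hsum2 : Summable fun m : ℕ => lam ^ (m+1) / m.factorial * (b - a) ^ m * (b - t) :=
      (summable_pow_bound hlam (b - a)).mul_right _
    rw [← ENNReal.ofReal_tsum_of_nonneg (fun m => mul_nonneg
      (mul_nonneg (by positivity) (pow_nonneg (by linarith) m)) (by linarith)) hsum2]
    exact ENNReal.ofReal_lt_top

lemma continuousAt_qf (R b : ℝ) (C : Finset ℝ) (m : ℕ) {s₀ : ℝ}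
    (hgood : ∀ c ∈ C, |s₀ - c| ≠ R) : ContinuousAt (qf R b C m) s₀ := by
  have hev : ∀ᶠ s in 𝓝 s₀, ((∀ c ∈ C, R < |s - c|) ↔ (∀ c ∈ C, R < |s₀ - c|)) := by
    have h1 : ∀ c ∈ C, ∀ᶠ s in 𝓝 s₀, ((R < |s - c|) ↔ (R < |s₀ - c|)) :=
      fun c hc => eventually_abs_iff (hgood c hc)
    filter_upwards [(Filter.eventually_all_finset C).2 h1] with s hs
    exact ⟨fun h c hc => (hs c hc).mp (h c hc), fun h c hc => (hs c hc).mpr (h c hc)⟩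
  have hloc : qf R b C m =ᶠ[𝓝 s₀]
      fun s => (if ∀ c ∈ C, R < |s₀ - c| then 1 else 0) * G R b C m s := by
    filter_upwards [hev] with s hs
    unfold qf
    rw [if_congr hs rfl rfl]
  rw [continuousAt_congr hloc]
  exact continuousAt_const.mul (continuousAt_G R b C m s₀)

lemma Qf_eq (R lam b : ℝ) (C : Finset ℝ) (x : ℝ) :
    Qf R lam b C x = lam * (if ∀ c ∈ C, R < |x - c| then 1 else 0)
      * partFun1 R lam (Set.Ioo x b) (insert x C) := by
  have hpf : partFun1 R lam (Set.Ioo x b) (insert x C)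
      = ∑' m : ℕ, lam ^ m / m.factorial * G R b C m x := by
    unfold partFun1
    exact tsum_congr fun m => by rw [integral_hsInd1 R x b (insert x C) m]; rfl
  rw [hpf, ← tsum_mul_left]
  refine tsum_congr fun m => ?_
  unfold qf
  rw [pow_succ]
  ring

end PF1


open Set Filter Topology PF1
open scoped ENNReal

/-- One-dimensional derivative of the partition function: with `z x := Z((x,b), C, λ)`,
for Lebesgue-almost every `x ∈ (a,b)`, `z` is differentiable at `x` with
`z'(x) = −λ · 1[∀ c ∈ C, |x − c| > R] · Z((x,b), C ∪ {x}, λ)`.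
Equivalently, almost everywhere, when `λ > 0`,
`−(1/λ) (d/dx) log Z((x,b), C, λ)
  = 1[∀ c ∈ C, |x − c| > R] · Z((x,b), C ∪ {x}, λ) / Z((x,b), C, λ)`. -/
theorem partFun1_deriv (R lam a b : ℝ) (hR : 0 ≤ R) (hlam : 0 ≤ lam)
    (hab : a < b) (C : Finset ℝ) :
    (∀ᵐ x ∂(volume.restrict (Set.Ioo a b)),
      HasDerivAt (fun t => partFun1 R lam (Set.Ioo t b) C)
        (-lam * (if ∀ c ∈ C, R < |x - c| then 1 else 0) *
          partFun1 R lam (Set.Ioo x b) (insert x C)) x) ∧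
    (∀ᵐ x ∂(volume.restrict (Set.Ioo a b)), 0 < lam →
      -(1 / lam) * deriv (fun t => Real.log (partFun1 R lam (Set.Ioo t b) C)) x =
        (if ∀ c ∈ C, R < |x - c| then 1 else 0) *
          partFun1 R lam (Set.Ioo x b) (insert x C) /
            partFun1 R lam (Set.Ioo x b) C) := by
  set badSet : Set ℝ := ⋃ c ∈ (C : Set ℝ), {c - R, c + R} with hbad
  have hbadfin : badSet.Finite :=
    Set.Finite.biUnion C.finite_toSet fun c _ => (Set.finite_singleton _).insert _
  have hQContOn : ContinuousOn (Qf R lam b C) (Set.Ioo a b \ badSet) := by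
    refine continuousOn_tsum (f := fun m s => lam ^ (m+1) / m.factorial * qf R b C m s)
      (fun m => ?_) (summable_pow_bound hlam (b - a)) (fun m s hs => ?_)
    · intro s hs
      have hgood : ∀ c ∈ C, |s - c| ≠ R := by
        intro c hc h
        apply hs.2
        rw [hbad]
        simp only [Set.mem_iUnion, Set.mem_insert_iff, Set.mem_singleton_iff, Finset.mem_coe]
        have h0 : (0:ℝ) ≤ R := h ▸ abs_nonneg _
        rcases (abs_eq h0).mp h with h1 | h1
        · exact ⟨c, hc, Or.inr (by linarith)⟩
        · exact ⟨c, hc, Or.inl (by linarith)⟩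
      exact (continuousAt_const.mul (continuousAt_qf R b C m hgood)).continuousWithinAt
    · rw [norm_mul]
      calc ‖lam ^ (m+1) / m.factorial‖ * ‖qf R b C m s‖
          ≤ ‖lam ^ (m+1) / m.factorial‖ * (b - a) ^ m :=
            mul_le_mul_of_nonneg_left (qf_le hab R C m hs.1.1) (norm_nonneg _)
        _ = lam ^ (m+1) / m.factorial * (b - a) ^ m := by
            congr 1
            rw [Real.norm_eq_abs, abs_of_nonneg (by positivity)]
  have key : ∀ x ∈ Set.Ioo a b \ badSet,
      HasDerivAt (fun t => partFun1 R lam (Set.Ioo t b) C)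
        (-lam * (if ∀ c ∈ C, R < |x - c| then 1 else 0) *
          partFun1 R lam (Set.Ioo x b) (insert x C)) x := by
    intro x hx
    obtain ⟨hxab, hxbad⟩ := hx
    have hQcont : ContinuousAt (Qf R lam b C) x :=
      hQContOn.continuousAt ((isOpen_Ioo.sdiff hbadfin.isClosed).mem_nhds ⟨hxab, hxbad⟩)
    have hII : IntervalIntegrable (Qf R lam b C) volume x b := by
      rw [intervalIntegrable_iff_integrableOn_Ioc_of_le (le_of_lt hxab.2)]
      refine Integrable.mono' (g := fun _ => ∑' m : ℕ, lam ^ (m+1) / m.factorial * (b - a) ^ m)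
        ?_ ((measurable_Qf R lam b C hlam).aestronglyMeasurable.restrict) ?_
      · exact integrableOn_const (by rw [Real.volume_Ioc]; exact ENNReal.ofReal_ne_top)
      · filter_upwards [ae_restrict_mem measurableSet_Ioc] with s hs
        exact Qf_le hab hlam R C (lt_trans hxab.1 hs.1)
    have hftc : HasDerivAt (fun u => ∫ s in u..b, Qf R lam b C s) (-(Qf R lam b C x)) x :=
      intervalIntegral.integral_hasDerivAt_left hII
        ((measurable_Qf R lam b C hlam).aestronglyMeasurable.stronglyMeasurableAtFilter) hQcont
    have hg : HasDerivAt (fun u => 1 + ∫ s in u..b, Qf R lam b C s) (-(Qf R lam b C x)) x := by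
      have := (hasDerivAt_const x (1:ℝ)).add hftc
      rwa [zero_add] at this
    have hfun : (fun t => partFun1 R lam (Set.Ioo t b) C)
        =ᶠ[𝓝 x] fun u => 1 + ∫ s in u..b, Qf R lam b C s := by
      filter_upwards [isOpen_Ioo.mem_nhds hxab] with t ht
      rw [partFun1_rep hR hlam hab C ht.1 ht.2,
        intervalIntegral.integral_of_le (le_of_lt ht.2),
        MeasureTheory.integral_Ioc_eq_integral_Ioo]
    have hD := hg.congr_of_eventuallyEq hfun
    have hval : -(Qf R lam b C x) = -lam * (if ∀ c ∈ C, R < |x - c| then 1 else 0) *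
        partFun1 R lam (Set.Ioo x b) (insert x C) := by
      rw [Qf_eq]; ring
    rwa [hval] at hD
  have h1 : ∀ᵐ x ∂(volume.restrict (Set.Ioo a b)), x ∈ Set.Ioo a b :=
    ae_restrict_mem measurableSet_Ioo
  have h2 : ∀ᵐ x ∂(volume.restrict (Set.Ioo a b)), x ∉ badSet :=
    ae_restrict_of_ae (measure_eq_zero_iff_ae_notMem.mp (hbadfin.measure_zero _))
  constructor
  · filter_upwards [h1, h2] with x hx1 hx2
    exact key x ⟨hx1, hx2⟩
  · filter_upwards [h1, h2] with x hx1 hx2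
    intro hlam'
    have hd := key x ⟨hx1, hx2⟩
    have hzpos : 0 < partFun1 R lam (Set.Ioo x b) C := by
      rw [partFun1_rep hR hlam hab C hx1.1 hx1.2]
      have h0 : 0 ≤ ∫ s in Set.Ioo x b, Qf R lam b C s :=
        integral_nonneg fun s => Qf_nonneg hlam R b C s
      linarith
    have hlog := hd.log (ne_of_gt hzpos)
    rw [hlog.deriv]
    have hzne := ne_of_gt hzpos
    have hlamne := ne_of_gt hlam'
    field_simp
end

section
/- First-point decomposition of the one-dimensional partition function: let d = 1, R ≥ 0, λ ≥ 0, a < b reals, and C ⊆ ℝ a finite set. Then Z((a,b), C, λ) = 1 + λ ∫_{(a,b)} 1[∀ c ∈ C, |y − c| > R] · Z((y,b), C ∪ {y}, λ) dy, where the integral is with respect to Lebesgue measure on (a,b). -/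
open MeasureTheory
open scoped Classical
open scoped ENNReal

def hsSet (R : ℝ) (C : Finset ℝ) (n : ℕ) : Set (Fin n → ℝ) :=
  {x | (∀ i j : Fin n, i < j → R < |x i - x j|) ∧ ∀ i : Fin n, ∀ c ∈ C, R < |x i - c|}

lemma measurableSet_hsSet (R : ℝ) (C : Finset ℝ) (n : ℕ) : MeasurableSet (hsSet R C n) := by
  unfold hsSet
  rw [Set.setOf_and]
  apply MeasurableSet.inter
  · rw [Set.setOf_forall]
    refine MeasurableSet.iInter fun i => ?_
    rw [Set.setOf_forall]
    refine MeasurableSet.iInter fun j => ?_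
    by_cases hij : i < j
    · simp only [hij, true_implies]
      exact measurableSet_lt measurable_const
        (((measurable_pi_apply i).sub (measurable_pi_apply j)).abs)
    · simp only [hij, false_implies, Set.setOf_true]
      exact MeasurableSet.univ
  · rw [Set.setOf_forall]
    refine MeasurableSet.iInter fun i => ?_
    have : {x : Fin n → ℝ | ∀ c ∈ C, R < |x i - c|} = ⋂ c ∈ (C : Set ℝ), {x | R < |x i - c|} := by
      ext x; simp
    rw [this]
    refine MeasurableSet.biInter C.countable_toSet fun c _ => ?_
    exact measurableSet_lt measurable_const
      (((measurable_pi_apply i).sub measurable_const).abs)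

noncomputable def hsM (R : ℝ) (C : Finset ℝ) (n : ℕ) (B : Set ℝ) : ℝ≥0∞ :=
  Measure.pi (fun _ : Fin n => (volume : Measure ℝ)) (hsSet R C n ∩ Set.univ.pi fun _ => B)

lemma hsInd1_eq (R : ℝ) (C : Finset ℝ) {n : ℕ} (x : Fin n → ℝ) :
    hsInd1 R C x = (hsSet R C n).indicator 1 x := by
  rw [hsInd1, Set.indicator_apply]
  by_cases h : (∀ i j : Fin n, i < j → R < |x i - x j|) ∧ (∀ i : Fin n, ∀ c ∈ C, R < |x i - c|)
  · rw [if_pos h, if_pos (show x ∈ hsSet R C n from h)]; rfl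
  · rw [if_neg h, if_neg (show x ∉ hsSet R C n from h)]

lemma integral_hsInd1 (R : ℝ) (C : Finset ℝ) {n : ℕ} {B : Set ℝ} :
    ∫ x in Set.univ.pi (fun _ : Fin n => B), hsInd1 R C x = (hsM R C n B).toReal := by
  simp_rw [hsInd1_eq]
  rw [integral_indicator_one (measurableSet_hsSet R C n),
    measureReal_def, Measure.restrict_apply (measurableSet_hsSet R C n), hsM, volume_pi]

lemma partFun1_eq (R lam : ℝ) (B : Set ℝ) (C : Finset ℝ) :
    partFun1 R lam B C = ∑' n : ℕ, lam ^ n / n.factorial * (hsM R C n B).toReal := by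
  unfold partFun1
  congr 1
  funext n
  rw [integral_hsInd1 R C]

lemma hsM_zero (R : ℝ) (C : Finset ℝ) (B : Set ℝ) : hsM R C 0 B = 1 := by
  have h1 : hsSet R C 0 ∩ Set.univ.pi (fun _ : Fin 0 => B) = Set.univ := by
    ext x
    simp [hsSet]
  rw [hsM, h1, ← Set.pi_univ Set.univ, Measure.pi_pi]
  simp

lemma hsM_le (R : ℝ) (C : Finset ℝ) (n : ℕ) (a b : ℝ) :
    hsM R C n (Set.Ioo a b) ≤ ENNReal.ofReal (b - a) ^ n := by
  calc hsM R C n (Set.Ioo a b)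
      ≤ Measure.pi (fun _ : Fin n => (volume : Measure ℝ)) (Set.univ.pi fun _ => Set.Ioo a b) :=
        measure_mono Set.inter_subset_right
    _ = ∏ _i : Fin n, volume (Set.Ioo a b) := Measure.pi_pi _ _
    _ = ENNReal.ofReal (b - a) ^ n := by
        simp [Real.volume_Ioo, Finset.prod_const]

lemma pi_eval_eq_zero (n : ℕ) (j : Fin n) (c : ℝ) :
    Measure.pi (fun _ : Fin n => (volume : Measure ℝ)) {z | z j = c} = 0 := by
  have h : {z : Fin n → ℝ | z j = c} = Set.univ.pi (fun k => if k = j then {c} else Set.univ) := by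
    ext z
    simp only [Set.mem_setOf_eq, Set.mem_univ_pi]
    constructor
    · intro h k
      by_cases hk : k = j
      · subst hk; simp [h]
      · simp [hk]
    · intro h
      have := h j
      simpa using this
  rw [h, Measure.pi_pi]
  refine Finset.prod_eq_zero (Finset.mem_univ j) ?_
  simp

lemma diag_null (n : ℕ) (i j : Fin (n + 1)) (hij : i ≠ j) :
    Measure.pi (fun _ : Fin (n + 1) => (volume : Measure ℝ)) {x | x i = x j} = 0 := by
  obtain ⟨j', hj'⟩ := Fin.exists_succAbove_eq (Ne.symm hij)
  set e := MeasurableEquiv.piFinSuccAbove (fun _ : Fin (n + 1) => ℝ) i with he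
  have hp := measurePreserving_piFinSuccAbove (fun _ : Fin (n + 1) => (volume : Measure ℝ)) i
  have ht : MeasurableSet {p : ℝ × (Fin n → ℝ) | p.1 = p.2 j'} :=
    measurableSet_eq_fun measurable_fst ((measurable_pi_apply j').comp measurable_snd)
  have hpre : {x : Fin (n + 1) → ℝ | x i = x j} = e ⁻¹' {p | p.1 = p.2 j'} := by
    ext x
    simp only [Set.mem_preimage, Set.mem_setOf_eq]
    have h1 : (e x).1 = x i := rfl
    have h2 : (e x).2 j' = x (i.succAbove j') := rfl
    rw [h1, h2, hj']
  rw [hpre, hp.measure_preimage ht.nullMeasurableSet, Measure.prod_apply ht]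
  have hz : ∀ y : ℝ,
      (Measure.pi fun _ : Fin n => (volume : Measure ℝ)) (Prod.mk y ⁻¹' {p : ℝ × (Fin n → ℝ) | p.1 = p.2 j'}) = 0 := by
    intro y
    have : (Prod.mk y ⁻¹' {p : ℝ × (Fin n → ℝ) | p.1 = p.2 j'}) = {z : Fin n → ℝ | z j' = y} := by
      ext z; exact eq_comm
    rw [this]
    exact pi_eval_eq_zero n j' y
  rw [lintegral_congr hz, lintegral_zero]

lemma measurePreserving_comp_perm (n : ℕ) (σ : Equiv.Perm (Fin n)) :
    MeasurePreserving (fun x : Fin n → ℝ => x ∘ σ)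
      (Measure.pi fun _ => volume) (Measure.pi fun _ => volume) := by
  have h := measurePreserving_piCongrLeft (fun _ : Fin n => (volume : Measure ℝ)) σ.symm
  have heq : ⇑(MeasurableEquiv.piCongrLeft (fun _ : Fin n => ℝ) σ.symm)
      = fun x : Fin n → ℝ => x ∘ σ := by
    funext x
    funext i
    have h2 := Equiv.piCongrLeft_apply_apply (fun _ : Fin n => ℝ) σ.symm x (σ i)
    rw [MeasurableEquiv.coe_piCongrLeft]
    simpa using h2
  rwa [heq] at h

lemma hsSet_mem_iff_ne (R : ℝ) (C : Finset ℝ) {n : ℕ} (y : Fin n → ℝ) :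
    y ∈ hsSet R C n ↔
      ((∀ i j, i ≠ j → R < |y i - y j|) ∧ ∀ i, ∀ c ∈ C, R < |y i - c|) := by
  constructor
  · rintro ⟨h1, h2⟩
    refine ⟨fun i j hij => ?_, h2⟩
    rcases lt_or_gt_of_ne hij with h | h
    · exact h1 i j h
    · rw [abs_sub_comm]; exact h1 j i h
  · rintro ⟨h1, h2⟩
    exact ⟨fun i j hij => h1 i j hij.ne, h2⟩

lemma hsSet_comp_perm (R : ℝ) (C : Finset ℝ) {n : ℕ} (σ : Equiv.Perm (Fin n)) (x : Fin n → ℝ) :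
    (x ∘ σ) ∈ hsSet R C n ↔ x ∈ hsSet R C n := by
  rw [hsSet_mem_iff_ne, hsSet_mem_iff_ne]
  constructor
  · rintro ⟨h1, h2⟩
    refine ⟨fun i j hij => ?_, fun i c hc => ?_⟩
    · have := h1 (σ.symm i) (σ.symm j) (fun h => hij (by simpa using congrArg σ h))
      simpa using this
    · simpa using h2 (σ.symm i) c hc
  · rintro ⟨h1, h2⟩
    exact ⟨fun i j hij => h1 (σ i) (σ j) (fun h => hij (σ.injective h)),
      fun i c hc => h2 (σ i) c hc⟩

/-- The "second slice" set. -/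
def E2Set (R b : ℝ) (C : Finset ℝ) (n : ℕ) : Set (ℝ × (Fin n → ℝ)) :=
  {p | (∀ i j : Fin n, i < j → R < |p.2 i - p.2 j|) ∧ (∀ i, R < |p.2 i - p.1|) ∧
       (∀ i, ∀ c ∈ C, R < |p.2 i - c|) ∧ ∀ j, p.1 < p.2 j ∧ p.2 j < b}

lemma mem_E2Set_iff (R b : ℝ) (C : Finset ℝ) (n : ℕ) (p : ℝ × (Fin n → ℝ)) :
    p ∈ E2Set R b C n ↔
      p.2 ∈ hsSet R (insert p.1 C) n ∧ p.2 ∈ Set.univ.pi fun _ => Set.Ioo p.1 b := by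
  simp only [E2Set, Set.mem_setOf_eq, hsSet, Set.mem_univ_pi, Set.mem_Ioo,
    Finset.forall_mem_insert, forall_and]
  tauto

lemma measurableSet_E2Set (R b : ℝ) (C : Finset ℝ) (n : ℕ) :
    MeasurableSet (E2Set R b C n) := by
  unfold E2Set
  simp only [Set.setOf_and]
  refine MeasurableSet.inter ?_ (MeasurableSet.inter ?_ (MeasurableSet.inter ?_ ?_))
  · rw [Set.setOf_forall]
    refine MeasurableSet.iInter fun i => ?_
    rw [Set.setOf_forall]
    refine MeasurableSet.iInter fun j => ?_
    by_cases hij : i < j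
    · simp only [hij, true_implies]
      exact measurableSet_lt measurable_const
        ((((measurable_snd.eval : Measurable fun p : ℝ × (Fin n → ℝ) => p.2 i)).sub
          ((measurable_snd.eval : Measurable fun p : ℝ × (Fin n → ℝ) => p.2 j))).abs)
    · simp only [hij, false_implies, Set.setOf_true]
      exact MeasurableSet.univ
  · rw [Set.setOf_forall]
    refine MeasurableSet.iInter fun i => ?_
    exact measurableSet_lt measurable_const
      ((((measurable_snd.eval : Measurable fun p : ℝ × (Fin n → ℝ) => p.2 i)).sub measurable_fst).abs)
  · rw [Set.setOf_forall]
    refine MeasurableSet.iInter fun i => ?_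
    have : {p : ℝ × (Fin n → ℝ) | ∀ c ∈ C, R < |p.2 i - c|}
        = ⋂ c ∈ (C : Set ℝ), {p | R < |p.2 i - c|} := by
      ext p; simp
    rw [this]
    refine MeasurableSet.biInter C.countable_toSet fun c _ => ?_
    exact measurableSet_lt measurable_const
      ((((measurable_snd.eval : Measurable fun p : ℝ × (Fin n → ℝ) => p.2 i)).sub measurable_const).abs)
  · rw [Set.setOf_forall]
    refine MeasurableSet.iInter fun j => ?_
    rw [Set.setOf_and]
    exact (measurableSet_lt measurable_fst ((measurable_snd.eval : Measurable fun p : ℝ × (Fin n → ℝ) => p.2 j))).inter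
      (measurableSet_lt ((measurable_snd.eval : Measurable fun p : ℝ × (Fin n → ℝ) => p.2 j)) measurable_const)

lemma slice_E2 (R b : ℝ) (C : Finset ℝ) (n : ℕ) (y : ℝ) :
    (Measure.pi fun _ : Fin n => (volume : Measure ℝ)) (Prod.mk y ⁻¹' E2Set R b C n) =
      hsM R (insert y C) n (Set.Ioo y b) := by
  rw [hsM]
  congr 1
  ext z
  rw [Set.mem_preimage, mem_E2Set_iff]
  rfl

/-- Pointwise logic of the first-point decomposition. -/
lemma key_iff (R a b : ℝ) (C : Finset ℝ) (n : ℕ) (x : Fin (n + 1) → ℝ) :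
    (x ∈ hsSet R C (n + 1) ∧ (∀ i, x i ∈ Set.Ioo a b) ∧
        ∀ j : Fin (n + 1), j ≠ 0 → x 0 < x j) ↔
      (x 0 ∈ Set.Ioo a b ∧ (∀ c ∈ C, R < |x 0 - c|) ∧
        (x ∘ Fin.succ) ∈ hsSet R (insert (x 0) C) n ∧
        ∀ j : Fin n, x j.succ ∈ Set.Ioo (x 0) b) := by
  constructor
  · rintro ⟨⟨h1, h2⟩, hbox, hmin⟩
    refine ⟨hbox 0, fun c hc => h2 0 c hc, ⟨?_, ?_⟩, ?_⟩
    · intro i j hij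
      exact h1 i.succ j.succ (by simpa using hij)
    · intro i c hc
      rcases Finset.mem_insert.1 hc with rfl | hc
      · rw [abs_sub_comm]
        exact h1 0 i.succ (Fin.succ_pos i)
      · exact h2 i.succ c hc
    · intro j
      exact ⟨hmin j.succ (Fin.succ_ne_zero j), (hbox j.succ).2⟩
  · rintro ⟨h0, hC0, ⟨h1, h2⟩, hbox⟩
    have hlt : ∀ j : Fin n, x 0 < x j.succ := fun j => (hbox j).1
    refine ⟨⟨?_, ?_⟩, ?_, ?_⟩
    · intro i j hij
      rcases Fin.eq_zero_or_eq_succ i with rfl | ⟨i', rfl⟩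
      · rcases Fin.eq_zero_or_eq_succ j with rfl | ⟨j', rfl⟩
        · exact absurd hij (lt_irrefl _)
        · rw [abs_sub_comm]
          exact h2 j' (x 0) (Finset.mem_insert_self _ _)
      · rcases Fin.eq_zero_or_eq_succ j with rfl | ⟨j', rfl⟩
        · exact absurd hij (by simp [Fin.lt_iff_val_lt_val])
        · exact h1 i' j' (by simpa using hij)
    · intro i c hc
      rcases Fin.eq_zero_or_eq_succ i with rfl | ⟨i', rfl⟩
      · exact hC0 c hc
      · exact h2 i' c (Finset.mem_insert_of_mem hc)
    · intro i
      rcases Fin.eq_zero_or_eq_succ i with rfl | ⟨i', rfl⟩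
      · exact h0
      · exact ⟨h0.1.trans (hlt i'), (hbox i').2⟩
    · intro j hj
      rcases Fin.eq_zero_or_eq_succ j with rfl | ⟨j', rfl⟩
      · exact absurd rfl hj
      · exact hlt j'

def TSet (n : ℕ) (k : Fin (n + 1)) : Set (Fin (n + 1) → ℝ) := {x | ∀ j, j ≠ k → x k < x j}

lemma measurableSet_TSet (n : ℕ) (k : Fin (n + 1)) : MeasurableSet (TSet n k) := by
  unfold TSet
  rw [Set.setOf_forall]
  refine MeasurableSet.iInter fun j => ?_
  by_cases hj : j = k
  · have h : {x : Fin (n + 1) → ℝ | j ≠ k → x k < x j} = Set.univ := by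
      ext x; simp [hj]
    rw [h]; exact MeasurableSet.univ
  · have h : {x : Fin (n + 1) → ℝ | j ≠ k → x k < x j} = {x | x k < x j} := by
      ext x; simp [hj]
    rw [h]
    exact measurableSet_lt (measurable_pi_apply k) (measurable_pi_apply j)

lemma measurableSet_okSet (R : ℝ) (C : Finset ℝ) :
    MeasurableSet {t : ℝ | ∀ c ∈ C, R < |t - c|} := by
  have h : {t : ℝ | ∀ c ∈ C, R < |t - c|} = ⋂ c ∈ (C : Set ℝ), {t | R < |t - c|} := by
    ext t; simp
  rw [h]
  refine MeasurableSet.biInter C.countable_toSet fun c _ => ?_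
  exact measurableSet_lt measurable_const ((measurable_id.sub measurable_const).abs)

lemma hsM_succ (R a b : ℝ) (C : Finset ℝ) (n : ℕ) :
    hsM R C (n + 1) (Set.Ioo a b) =
      (n + 1 : ℕ) * ∫⁻ y in Set.Ioo a b,
        Set.indicator {t : ℝ | ∀ c ∈ C, R < |t - c|} 1 y * hsM R (insert y C) n (Set.Ioo y b) := by
  set μ := Measure.pi fun _ : Fin (n + 1) => (volume : Measure ℝ) with hμ
  set A := hsSet R C (n + 1) ∩ Set.univ.pi fun _ : Fin (n + 1) => Set.Ioo a b with hA
  have hAmeas : MeasurableSet A :=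
    (measurableSet_hsSet _ _ _).inter (MeasurableSet.univ_pi fun _ => measurableSet_Ioo)
  -- null complement of the strict-minimum sets
  have hnull : μ (A \ ⋃ k, TSet n k) = 0 := by
    have hsub : (A \ ⋃ k, TSet n k) ⊆
        ⋃ (i : Fin (n + 1)) (j : Fin (n + 1)) (_ : i ≠ j), {x | x i = x j} := by
      rintro x ⟨-, hx⟩
      obtain ⟨k, -, hk⟩ := Finset.exists_min_image Finset.univ x ⟨0, Finset.mem_univ 0⟩
      have hxk : x ∉ TSet n k := fun h => hx (Set.mem_iUnion.2 ⟨k, h⟩)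
      simp only [TSet, Set.mem_setOf_eq, not_forall] at hxk
      obtain ⟨j, hjk, hj⟩ := hxk
      have hxeq : x k = x j := le_antisymm (hk j (Finset.mem_univ j)) (not_lt.1 hj)
      exact Set.mem_iUnion.2 ⟨k, Set.mem_iUnion.2 ⟨j, Set.mem_iUnion.2 ⟨Ne.symm hjk, hxeq⟩⟩⟩
    exact measure_mono_null hsub
      (measure_iUnion_null fun i => measure_iUnion_null fun j =>
        measure_iUnion_null fun hij => diag_null n i j hij)
  have hdisj : Pairwise (Function.onFun Disjoint (TSet n)) := by
    intro k l hkl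
    rw [Function.onFun, Set.disjoint_left]
    intro x hxk hxl
    exact absurd (hxk l (Ne.symm hkl)) (not_lt.2 (le_of_lt (hxl k hkl)))
  have hperm : ∀ k, μ (A ∩ TSet n k) = μ (A ∩ TSet n 0) := by
    intro k
    set σ : Equiv.Perm (Fin (n + 1)) := Equiv.swap 0 k with hσ
    have hσ0 : σ 0 = k := Equiv.swap_apply_left 0 k
    have hmp := measurePreserving_comp_perm (n + 1) σ
    have hpre : (fun x : Fin (n + 1) → ℝ => x ∘ σ) ⁻¹' (A ∩ TSet n 0) = A ∩ TSet n k := by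
      ext x
      simp only [Set.mem_preimage, Set.mem_inter_iff]
      apply and_congr
      · rw [hA]
        simp only [Set.mem_inter_iff]
        apply and_congr (hsSet_comp_perm R C σ x)
        simp only [Set.mem_univ_pi, Function.comp_apply]
        constructor
        · intro h i
          have := h (σ.symm i)
          rwa [Equiv.apply_symm_apply] at this
        · intro h i
          exact h (σ i)
      · simp only [TSet, Set.mem_setOf_eq, Function.comp_apply]
        constructor
        · intro h j hj
          have h' := h (σ.symm j)
            (fun h0 => hj (by rw [← Equiv.apply_symm_apply σ j, h0, hσ0]))
          rwa [hσ0, Equiv.apply_symm_apply] at h'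
        · intro h j hj
          rw [hσ0]
          exact h (σ j) (fun h0 => hj (σ.injective (h0.trans hσ0.symm)))
    rw [← hpre, hmp.measure_preimage (hAmeas.inter (measurableSet_TSet n 0)).nullMeasurableSet]
  have hcount : μ A = (n + 1 : ℕ) * μ (A ∩ TSet n 0) := by
    have h1 : μ A = μ (A ∩ ⋃ k, TSet n k) + μ (A \ ⋃ k, TSet n k) :=
      (measure_inter_add_diff A (MeasurableSet.iUnion fun k => measurableSet_TSet n k)).symm
    rw [h1, hnull, add_zero, Set.inter_iUnion,
      measure_iUnion
        (fun k l hkl => (hdisj hkl).mono Set.inter_subset_right Set.inter_subset_right)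
        (fun k => hAmeas.inter (measurableSet_TSet n k)),
      tsum_fintype, Finset.sum_congr rfl (fun k _ => hperm k), Finset.sum_const,
      Finset.card_univ, Fintype.card_fin, nsmul_eq_mul]
  -- slice computation
  have hslice : μ (A ∩ TSet n 0) = ∫⁻ y in Set.Ioo a b,
      Set.indicator {t : ℝ | ∀ c ∈ C, R < |t - c|} 1 y * hsM R (insert y C) n (Set.Ioo y b) := by
    set E : Set (ℝ × (Fin n → ℝ)) :=
      ((Set.Ioo a b ∩ {t : ℝ | ∀ c ∈ C, R < |t - c|}) ×ˢ (Set.univ : Set (Fin n → ℝ))) ∩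
        E2Set R b C n with hE
    have hEmeas : MeasurableSet E :=
      ((measurableSet_Ioo.inter (measurableSet_okSet R C)).prod MeasurableSet.univ).inter
        (measurableSet_E2Set R b C n)
    have hpre : A ∩ TSet n 0 =
        (MeasurableEquiv.piFinSuccAbove (fun _ : Fin (n + 1) => ℝ) 0) ⁻¹' E := by
      ext x
      rw [Set.mem_preimage]
      have hx1 : (MeasurableEquiv.piFinSuccAbove (fun _ : Fin (n + 1) => ℝ) 0 x).1 = x 0 := rfl
      have hx2 : (MeasurableEquiv.piFinSuccAbove (fun _ : Fin (n + 1) => ℝ) 0 x).2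
          = x ∘ Fin.succ := rfl
      simp only [hE, Set.mem_inter_iff, Set.mem_prod, mem_E2Set_iff, hx1, hx2]
      constructor
      · rintro ⟨hxA, hxT⟩
        rw [hA, Set.mem_inter_iff, Set.mem_univ_pi] at hxA
        have hk := (key_iff R a b C n x).1 ⟨hxA.1, hxA.2, fun j hj => hxT j hj⟩
        refine ⟨⟨⟨hk.1, hk.2.1⟩, Set.mem_univ _⟩, hk.2.2.1, ?_⟩
        rw [Set.mem_univ_pi]
        intro j
        exact hk.2.2.2 j
      · rintro ⟨⟨⟨hy, hok⟩, -⟩, hh1, hh2⟩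
        rw [Set.mem_univ_pi] at hh2
        have hk := (key_iff R a b C n x).2 ⟨hy, hok, hh1, fun j => hh2 j⟩
        refine ⟨?_, fun j hj => hk.2.2 j hj⟩
        rw [hA, Set.mem_inter_iff, Set.mem_univ_pi]
        exact ⟨hk.1, hk.2.1⟩
    have hp := measurePreserving_piFinSuccAbove (fun _ : Fin (n + 1) => (volume : Measure ℝ)) 0
    rw [hpre, hp.measure_preimage hEmeas.nullMeasurableSet, Measure.prod_apply hEmeas]
    have hsl : ∀ y : ℝ, (Measure.pi fun _ : Fin n => (volume : Measure ℝ)) (Prod.mk y ⁻¹' E)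
        = Set.indicator (Set.Ioo a b)
            (fun y' => Set.indicator {t : ℝ | ∀ c ∈ C, R < |t - c|} 1 y' *
              hsM R (insert y' C) n (Set.Ioo y' b)) y := by
      intro y
      by_cases h1 : y ∈ Set.Ioo a b
      · by_cases h2 : y ∈ {t : ℝ | ∀ c ∈ C, R < |t - c|}
        · rw [Set.indicator_of_mem h1, Set.indicator_of_mem h2, Pi.one_apply, one_mul,
            ← slice_E2 R b C n y]
          congr 1
          ext z
          simp only [hE, Set.mem_preimage, Set.mem_inter_iff, Set.mem_prod, Set.mem_univ,
            and_true]
          exact and_iff_right ⟨h1, h2⟩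
        · rw [Set.indicator_of_mem h1, Set.indicator_of_notMem h2, zero_mul]
          have hempty : Prod.mk y ⁻¹' E = ∅ := by
            ext z
            simp only [hE, Set.mem_preimage, Set.mem_inter_iff, Set.mem_prod, Set.mem_univ,
              and_true, Set.mem_empty_iff_false, iff_false]
            rintro ⟨⟨-, hok⟩, -⟩
            exact h2 hok
          rw [hempty, measure_empty]
      · rw [Set.indicator_of_notMem h1]
        have hempty : Prod.mk y ⁻¹' E = ∅ := by
          ext z
          simp only [hE, Set.mem_preimage, Set.mem_inter_iff, Set.mem_prod, Set.mem_univ,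
            and_true, Set.mem_empty_iff_false, iff_false]
          rintro ⟨⟨hy, -⟩, -⟩
          exact h1 hy
        rw [hempty, measure_empty]
    rw [lintegral_congr hsl, lintegral_indicator measurableSet_Ioo]
  calc hsM R C (n + 1) (Set.Ioo a b) = μ A := rfl
    _ = (n + 1 : ℕ) * μ (A ∩ TSet n 0) := hcount
    _ = _ := by rw [hslice]

/-- First-point decomposition of the one-dimensional partition function:
`Z((a,b), C, λ) = 1 + λ ∫_{(a,b)} 1[∀ c ∈ C, |y − c| > R] · Z((y,b), C ∪ {y}, λ) dy`. -/
theorem partFun1_first_point (R lam a b : ℝ) (hR : 0 ≤ R) (hlam : 0 ≤ lam)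
    (hab : a < b) (C : Finset ℝ) :
    partFun1 R lam (Set.Ioo a b) C =
      1 + lam * ∫ y in Set.Ioo a b,
        (if ∀ c ∈ C, R < |y - c| then 1 else 0) *
          partFun1 R lam (Set.Ioo y b) (insert y C) := by
  -- notation
  set ok : Set ℝ := {t : ℝ | ∀ c ∈ C, R < |t - c|} with hok
  set g : ℕ → ℝ → ℝ≥0∞ :=
    fun m y => ok.indicator 1 y * hsM R (insert y C) m (Set.Ioo y b) with hg
  set J : ℕ → ℝ≥0∞ := fun m => ∫⁻ y in Set.Ioo a b, g m y with hJ
  -- measurability of g m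
  have hhs : ∀ m : ℕ, Measurable fun y => hsM R (insert y C) m (Set.Ioo y b) := by
    intro m
    have h : (fun y => hsM R (insert y C) m (Set.Ioo y b)) = fun y =>
        (Measure.pi fun _ : Fin m => (volume : Measure ℝ)) (Prod.mk y ⁻¹' E2Set R b C m) := by
      funext y; rw [slice_E2]
    rw [h]
    exact measurable_measure_prodMk_left (measurableSet_E2Set R b C m)
  have hgmeas : ∀ m : ℕ, Measurable (g m) :=
    fun m => (measurable_one.indicator (measurableSet_okSet R C)).mul (hhs m)
  -- bound on g
  have hgle : ∀ (m : ℕ) (y : ℝ), g m y ≤ ENNReal.ofReal |b - y| ^ m := by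
    intro m y
    have h1 : ok.indicator (1 : ℝ → ℝ≥0∞) y ≤ 1 := by
      rw [Set.indicator_apply]; split_ifs <;> simp
    calc g m y ≤ 1 * (ENNReal.ofReal (b - y) ^ m) := mul_le_mul' h1 (hsM_le R _ m y b)
      _ = ENNReal.ofReal (b - y) ^ m := one_mul _
      _ ≤ ENNReal.ofReal |b - y| ^ m :=
          pow_le_pow_left₀ (zero_le) (ENNReal.ofReal_le_ofReal (le_abs_self _)) m
  have hgfin : ∀ (m : ℕ) (y : ℝ), g m y ≠ ∞ :=
    fun m y => ne_top_of_le_ne_top (ENNReal.pow_ne_top ENNReal.ofReal_ne_top) (hgle m y)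
  -- finiteness of the pointwise series
  have hΦfin : ∀ y : ℝ, (∑' m : ℕ, ENNReal.ofReal (lam ^ m / m.factorial) * g m y) ≠ ∞ := by
    intro y
    have hle : ∀ m : ℕ, ENNReal.ofReal (lam ^ m / m.factorial) * g m y
        ≤ ENNReal.ofReal ((lam * |b - y|) ^ m / m.factorial) := by
      intro m
      calc ENNReal.ofReal (lam ^ m / m.factorial) * g m y
          ≤ ENNReal.ofReal (lam ^ m / m.factorial) * ENNReal.ofReal |b - y| ^ m :=
            mul_le_mul_right (hgle m y) _
        _ = ENNReal.ofReal (lam ^ m / m.factorial * |b - y| ^ m) := by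
            rw [← ENNReal.ofReal_pow (abs_nonneg _), ← ENNReal.ofReal_mul (by positivity)]
        _ = ENNReal.ofReal ((lam * |b - y|) ^ m / m.factorial) := by
            congr 1; rw [mul_pow]; ring
    refine ne_top_of_le_ne_top ?_ (ENNReal.tsum_le_tsum hle)
    rw [← ENNReal.ofReal_tsum_of_nonneg (fun m => by positivity)
      (Real.summable_pow_div_factorial _)]
    exact ENNReal.ofReal_ne_top
  -- J m is finite
  have hJfin : ∀ m : ℕ, J m ≠ ∞ := by
    intro m
    have h1 : ((m + 1 : ℕ) : ℝ≥0∞) * J m = hsM R C (m + 1) (Set.Ioo a b) :=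
      (hsM_succ R a b C m).symm
    have h2 : J m ≤ ((m + 1 : ℕ) : ℝ≥0∞) * J m :=
      le_mul_of_one_le_left (zero_le) (by exact_mod_cast Nat.succ_le_succ (Nat.zero_le m))
    refine ne_top_of_le_ne_top ?_ (h2.trans_eq h1)
    exact ne_top_of_le_ne_top (ENNReal.pow_ne_top ENNReal.ofReal_ne_top) (hsM_le R C (m + 1) a b)
  -- pointwise identity for the integrand
  have hφ : ∀ y : ℝ,
      (if ∀ c ∈ C, R < |y - c| then (1:ℝ) else 0) * partFun1 R lam (Set.Ioo y b) (insert y C)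
        = (∑' m : ℕ, ENNReal.ofReal (lam ^ m / m.factorial) * g m y).toReal := by
    intro y
    rw [ENNReal.tsum_toReal_eq
      (fun m => ENNReal.mul_ne_top ENNReal.ofReal_ne_top (hgfin m y))]
    by_cases hoky : ∀ c ∈ C, R < |y - c|
    · rw [if_pos hoky, one_mul, partFun1_eq]
      congr 1
      funext m
      rw [hg]
      simp only []
      rw [Set.indicator_of_mem (show y ∈ ok from hoky), Pi.one_apply, one_mul,
        ENNReal.toReal_mul, ENNReal.toReal_ofReal (by positivity)]
    · rw [if_neg hoky, zero_mul]
      symm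
      have hz : ∀ m : ℕ, (ENNReal.ofReal (lam ^ m / m.factorial) * g m y).toReal = 0 := by
        intro m
        rw [hg]
        simp only []
        rw [Set.indicator_of_notMem (show y ∉ ok from hoky), zero_mul, mul_zero]
        rfl
      simp only [hz, tsum_zero]
  -- the set integral
  have hint : (∫ y in Set.Ioo a b,
      (if ∀ c ∈ C, R < |y - c| then (1:ℝ) else 0) * partFun1 R lam (Set.Ioo y b) (insert y C))
        = (∑' m : ℕ, ENNReal.ofReal (lam ^ m / m.factorial) * J m).toReal := by
    have hΦmeas : Measurable fun y => ∑' m : ℕ, ENNReal.ofReal (lam ^ m / m.factorial) * g m y :=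
      Measurable.ennreal_tsum fun m => (hgmeas m).const_mul _
    rw [show (fun y => (if ∀ c ∈ C, R < |y - c| then (1:ℝ) else 0) *
        partFun1 R lam (Set.Ioo y b) (insert y C))
        = fun y => (∑' m : ℕ, ENNReal.ofReal (lam ^ m / m.factorial) * g m y).toReal
      from funext hφ]
    rw [integral_toReal (hΦmeas.aemeasurable)
      (Filter.Eventually.of_forall fun y => lt_top_iff_ne_top.2 (hΦfin y))]
    congr 1
    rw [lintegral_tsum fun m => ((hgmeas m).const_mul _).aemeasurable]
    congr 1
    funext m
    rw [lintegral_const_mul _ (hgmeas m)]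
  -- summability of the partition function series
  have htermle : ∀ n : ℕ, lam ^ n / n.factorial * (hsM R C n (Set.Ioo a b)).toReal
      ≤ (lam * (b - a)) ^ n / n.factorial := by
    intro n
    have h1 : (hsM R C n (Set.Ioo a b)).toReal ≤ (b - a) ^ n := by
      have := ENNReal.toReal_mono (ENNReal.pow_ne_top ENNReal.ofReal_ne_top)
        (hsM_le R C n a b)
      rwa [ENNReal.toReal_pow, ENNReal.toReal_ofReal (by linarith)] at this
    calc lam ^ n / n.factorial * (hsM R C n (Set.Ioo a b)).toReal
        ≤ lam ^ n / n.factorial * (b - a) ^ n := by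
          apply mul_le_mul_of_nonneg_left h1 (by positivity)
      _ = (lam * (b - a)) ^ n / n.factorial := by rw [mul_pow]; ring
  have hsummable : Summable fun n : ℕ => lam ^ n / n.factorial * (hsM R C n (Set.Ioo a b)).toReal :=
    Summable.of_nonneg_of_le (fun n => by positivity) htermle
      (Real.summable_pow_div_factorial _)
  -- final computation
  rw [partFun1_eq, hint, Summable.tsum_eq_zero_add hsummable]
  have h0 : lam ^ 0 / (Nat.factorial 0) * (hsM R C 0 (Set.Ioo a b)).toReal = 1 := by
    rw [hsM_zero]; simp
  rw [h0]
  congr 1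
  rw [ENNReal.tsum_toReal_eq
    (fun m => ENNReal.mul_ne_top ENNReal.ofReal_ne_top (hJfin m)), ← tsum_mul_left]
  congr 1
  funext m
  rw [hsM_succ R a b C m]
  have hJm : (∫⁻ y in Set.Ioo a b,
      Set.indicator {t : ℝ | ∀ c ∈ C, R < |t - c|} 1 y * hsM R (insert y C) m (Set.Ioo y b)) = J m := rfl
  rw [hJm, ENNReal.toReal_mul, ENNReal.toReal_natCast, ENNReal.toReal_mul,
    ENNReal.toReal_ofReal (by positivity)]
  have hfac : ((m.factorial : ℝ)) ≠ 0 := Nat.cast_ne_zero.2 m.factorial_ne_zero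
  have hm1 : ((m : ℝ) + 1) ≠ 0 := by positivity
  rw [Nat.factorial_succ]
  push_cast
  field_simp
  ring
end
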